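/- arXiv:2206.14280 — 3 statements merged into one kernel-verified Lean document; each statement's English description precedes it below -/
import Mathlib

section
/- Let α, β > −1, let μ, p > 0 with μp = k a positive integer, and let b > −p. Then for each n ∈ ℕ there exist real coefficients c_0, …, c_{n+k} such that for every x ∈ (−1,1], I^μ[Q_n^{(α,β,b,p)}](x) = Σ_{m=0}^{n+k} c_m Q_m^{(α,β,b,p)}(x). That is, the fractional integral operator I^μ maps the JFP basis to itself via a matrix with lower bandwidth k (bandwidths (k, ∞)). -/
open MeasureTheory intervalIntegral

noncomputable def Ccoef (α β : ℝ) (k n : ℕ) : ℝ :=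
  if k ≤ n then
    (-1 : ℝ) ^ (n - k) * (ascPochhammer ℝ (n - k)).eval ((k : ℝ) + β + 1)
      * (ascPochhammer ℝ k).eval ((n : ℝ) + α + β + 1)
      / (2 ^ k * (Nat.factorial (n - k)) * (Nat.factorial k))
  else 0

noncomputable def jacobiP (α β : ℝ) (n : ℕ) (x : ℝ) : ℝ :=
  ∑ k ∈ Finset.range (n + 1), Ccoef α β k n * (1 + x) ^ k

noncomputable def jfpQ (α β b p : ℝ) (n : ℕ) (x : ℝ) : ℝ :=
  (2 * ((1 + x) / 2) ^ (1 / p)) ^ b * jacobiP α β n (2 * ((1 + x) / 2) ^ (1 / p) - 1)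

noncomputable def fracInt (μ : ℝ) (f : ℝ → ℝ) (x : ℝ) : ℝ :=
  (1 / Real.Gamma μ) * ∫ t in (-1 : ℝ)..x, (x - t) ^ (μ - 1) * f t

lemma beta_integrable {μ s : ℝ} (hμ : 0 < μ) (hs : -1 < s) :
    IntervalIntegrable (fun v : ℝ => (1 - v) ^ (μ - 1) * v ^ s) volume 0 1 := by
  have h1 : IntervalIntegrable (fun v : ℝ => (1 - v) ^ (μ - 1) * v ^ s) volume 0 (1/2) := by
    have hg : ContinuousOn (fun v : ℝ => (1 - v) ^ (μ - 1)) (Set.uIcc 0 (1/2)) := by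
      apply ContinuousOn.rpow_const (by fun_prop)
      intro x hx
      rw [Set.uIcc_of_le (by norm_num)] at hx
      left; nlinarith [hx.2]
    simpa [mul_comm] using (intervalIntegrable_rpow' hs (a := 0) (b := 1/2)).continuousOn_mul hg
  have h2 : IntervalIntegrable (fun v : ℝ => (1 - v) ^ (μ - 1) * v ^ s) volume (1/2) 1 := by
    have hg : ContinuousOn (fun v : ℝ => v ^ s) (Set.uIcc (1/2) 1) := by
      apply ContinuousOn.rpow_const (by fun_prop)
      intro x hx
      rw [Set.uIcc_of_le (by norm_num)] at hx
      left; nlinarith [hx.1]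
    have hf : IntervalIntegrable (fun v : ℝ => (1 - v) ^ (μ - 1)) volume (1/2) 1 := by
      have := (intervalIntegrable_rpow' (by linarith : (-1:ℝ) < μ - 1) (a := 1/2) (b := 0)).comp_sub_left 1
      norm_num at this
      exact this
    exact hf.mul_continuousOn hg
  exact h1.trans h2

lemma kernel_integrable {μ s x : ℝ} (hμ : 0 < μ) (hs : -1 < s) (hx : -1 < x) :
    IntervalIntegrable (fun t : ℝ => (x - t) ^ (μ - 1) * (1 + t) ^ s) volume (-1) x := by
  set c : ℝ := 1 + x with hc
  have hcpos : 0 < c := by simp [hc]; linarith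
  have h0 : IntervalIntegrable (fun v : ℝ => (1 - v) ^ (μ - 1) * v ^ s) volume 0 1 :=
    beta_integrable hμ hs
  have h1 := (h0.comp_mul_right (c := c⁻¹))
  have h2 := h1.comp_add_right 1
  -- h2 : IntervalIntegrable (fun t => F ((t+1) * c⁻¹)) volume (0/c⁻¹ - 1) (1/c⁻¹ - 1)
  have h3 : IntervalIntegrable
      (fun t : ℝ => (1 - (t + 1) * c⁻¹) ^ (μ - 1) * ((t + 1) * c⁻¹) ^ s) volume (-1) x := by
    have e1 : (0 : ℝ) / c⁻¹ - 1 = -1 := by norm_num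
    have e2 : (1 : ℝ) / c⁻¹ - 1 = x := by rw [one_div, inv_inv, hc]; ring
    rw [e1, e2] at h2
    exact h2
  have h4 := (h3.const_mul (c ^ (μ - 1) * c ^ s))
  apply h4.congr
  intro t ht
  rw [Set.uIoc_of_le (by linarith)] at ht
  have ht1 : 0 < 1 + t := by linarith [ht.1]
  have ht2 : 0 ≤ x - t := by linarith [ht.2]
  have key1 : 1 - (t + 1) * c⁻¹ = (x - t) / c := by field_simp; ring
  have key2 : (t + 1) * c⁻¹ = (1 + t) / c := by field_simp; ring
  simp only []
  rw [key1, key2, Real.div_rpow ht2 hcpos.le, Real.div_rpow ht1.le hcpos.le]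
  have g1 : c ^ (μ - 1) ≠ 0 := (Real.rpow_pos_of_pos hcpos _).ne'
  have g2 : c ^ s ≠ 0 := (Real.rpow_pos_of_pos hcpos _).ne'
  field_simp

lemma kernel_integral {μ s x : ℝ} (hμ : 0 < μ) (hs : -1 < s) (hx : -1 < x) :
    ∫ t in (-1:ℝ)..x, (x - t) ^ (μ - 1) * (1 + t) ^ s
      = (∫ v in (0:ℝ)..1, (1 - v) ^ (μ - 1) * v ^ s) * (1 + x) ^ (μ + s) := by
  set g : ℝ → ℝ := fun t => (x - t) ^ (μ - 1) * (1 + t) ^ s with hg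
  set c : ℝ := 1 + x with hc
  have hcpos : 0 < c := by simp only [hc]; linarith
  have stepA : (∫ u in (0:ℝ)..c, g (u - 1)) = ∫ t in (-1:ℝ)..x, g t := by
    rw [integral_comp_sub_right g 1]
    norm_num [hc]
  have stepB : (∫ v in (0:ℝ)..1, g (v * c - 1)) = c⁻¹ • ∫ u in (0:ℝ)..c, g (u - 1) := by
    have := integral_comp_mul_right (fun u => g (u - 1)) hcpos.ne' (a := 0) (b := 1)
    simpa using this
  have stepC : (∫ v in (0:ℝ)..1, g (v * c - 1))
      = ∫ v in (0:ℝ)..1, c ^ (μ - 1) * c ^ s * ((1 - v) ^ (μ - 1) * v ^ s) := by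
    apply integral_congr
    intro v hv
    rw [Set.uIcc_of_le (by norm_num)] at hv
    have hv0 : 0 ≤ v := hv.1
    have hv1 : 0 ≤ 1 - v := by linarith [hv.2]
    have e1 : x - (v * c - 1) = c * (1 - v) := by rw [hc]; ring
    have e2 : 1 + (v * c - 1) = c * v := by ring
    simp only [hg, e1, e2]
    rw [Real.mul_rpow hcpos.le hv1, Real.mul_rpow hcpos.le hv0]
    ring
  have main : (∫ t in (-1:ℝ)..x, g t)
      = c * (c ^ (μ - 1) * c ^ s * ∫ v in (0:ℝ)..1, (1 - v) ^ (μ - 1) * v ^ s) := by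
    rw [← stepA, ← intervalIntegral.integral_const_mul, ← stepC, stepB, smul_eq_mul, ← mul_assoc,
      mul_inv_cancel₀ hcpos.ne', one_mul]
  rw [main]
  have hpow : c ^ (μ + s) = c * (c ^ (μ - 1) * c ^ s) := by
    have h1 : μ + s = 1 + (μ - 1) + s := by ring
    rw [h1, Real.rpow_add hcpos, Real.rpow_add hcpos, Real.rpow_one]; ring
  rw [hpow]
  ring

lemma jfpQ_expand (α β b p : ℝ) (hp : 0 < p) (n : ℕ) {t : ℝ} (ht : -1 < t) :
    jfpQ α β b p n t = ∑ j ∈ Finset.range (n + 1),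
      (Ccoef α β j n * (2:ℝ) ^ ((1 - 1/p) * (b + j))) * (1 + t) ^ ((b + j) / p) := by
  have ht0 : (0:ℝ) < 1 + t := by linarith
  set A : ℝ := 2 * ((1 + t) / 2) ^ (1 / p) with hA
  have hApos : 0 < A := by
    apply mul_pos two_pos
    exact Real.rpow_pos_of_pos (by linarith) _
  have hAeq : A = (2:ℝ) ^ (1 - 1/p) * (1 + t) ^ (1/p) := by
    rw [hA, Real.div_rpow ht0.le (by norm_num : (0:ℝ) ≤ 2),
      Real.rpow_sub two_pos, Real.rpow_one]
    ring
  rw [jfpQ, jacobiP, Finset.mul_sum]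
  apply Finset.sum_congr rfl
  intro j hj
  have e1 : 1 + (A - 1) = A := by ring
  rw [e1, mul_comm (Ccoef α β j n), ← mul_assoc, ← Real.rpow_natCast A j,
    ← Real.rpow_add hApos, hAeq,
    Real.mul_rpow (Real.rpow_nonneg (by norm_num) _) (Real.rpow_nonneg ht0.le _),
    ← Real.rpow_mul (by norm_num : (0:ℝ) ≤ 2), ← Real.rpow_mul ht0.le]
  rw [show (1/p) * (b + j) = (b + j) / p by ring]
  ring

lemma Ccoef_diag_pos (α β : ℝ) (hα : -1 < α) (hβ : -1 < β) (m : ℕ) :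
    0 < Ccoef α β m m := by
  rw [Ccoef, if_pos le_rfl]
  simp only [Nat.sub_self]
  have hden : (0:ℝ) < 2 ^ m * (Nat.factorial 0) * (Nat.factorial m) := by
    positivity
  apply div_pos _ hden
  simp only [pow_zero, one_mul, ascPochhammer_zero, Polynomial.eval_one]
  rcases Nat.eq_zero_or_pos m with hm | hm
  · subst hm; simp
  · have : (0:ℝ) < (m:ℝ) + α + β + 1 := by
      have : (1:ℝ) ≤ (m:ℝ) := by exact_mod_cast hm
      linarith
    simpa using ascPochhammer_pos m _ this

lemma rpow_span (α β b p : ℝ) (hα : -1 < α) (hβ : -1 < β) (hp : 0 < p) (m : ℕ) :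
    ∃ c : ℕ → ℝ, ∀ t : ℝ, -1 < t →
      (1 + t) ^ ((b + m) / p) = ∑ i ∈ Finset.range (m + 1), c i * jfpQ α β b p i t := by
  induction m using Nat.strong_induction_on with
  | _ m IH =>
  classical
  set D : ℕ → ℕ → ℝ := fun j l => Ccoef α β j l * (2:ℝ) ^ ((1 - 1/p) * (b + j)) with hD
  have hDm : D m m ≠ 0 := by
    apply ne_of_gt
    exact mul_pos (Ccoef_diag_pos α β hα hβ m) (Real.rpow_pos_of_pos two_pos _)
  choose cs hcs using fun j (h : j < m) => IH j h
  set cs' : ℕ → ℕ → ℝ := fun j => if h : j < m then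
      (fun i => if i ≤ j then cs j h i else 0) else 0 with hcs'def
  have hcs' : ∀ j, j < m → ∀ t : ℝ, -1 < t →
      (1 + t) ^ ((b + j) / p) = ∑ i ∈ Finset.range (m + 1), cs' j i * jfpQ α β b p i t := by
    intro j hj t ht
    rw [hcs j hj t ht]
    have step : ∑ i ∈ Finset.range (m + 1), cs' j i * jfpQ α β b p i t
        = ∑ i ∈ Finset.range (j + 1), cs' j i * jfpQ α β b p i t := by
      symm
      apply Finset.sum_subset (Finset.range_subset_range.2 (by omega))
      intro i hi hni
      simp only [Finset.mem_range, Nat.lt_succ_iff, not_le] at hni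
      simp [hcs'def, hj, Nat.not_le.2 hni]
    rw [step]
    apply Finset.sum_congr rfl
    intro i hi
    simp only [Finset.mem_range, Nat.lt_succ_iff] at hi
    simp [hcs'def, hj, hi]
  refine ⟨fun i => (if i = m then (D m m)⁻¹ else 0)
      - (D m m)⁻¹ * ∑ j ∈ Finset.range m, D j m * cs' j i, fun t ht => ?_⟩
  have expand := jfpQ_expand α β b p hp m ht
  rw [Finset.sum_range_succ] at expand
  -- expand : jfpQ m t = ∑_{j<m} D j m * E j + D m m * E m
  simp only [sub_mul, Finset.sum_sub_distrib, ite_mul, zero_mul]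
  rw [Finset.sum_ite_eq' (Finset.range (m+1)) m]
  simp only [Finset.mem_range, Nat.lt_succ_iff, le_refl, if_pos]
  have expandD : jfpQ α β b p m t = (∑ j ∈ Finset.range m, D j m * (1 + t) ^ ((b + (j:ℝ)) / p))
      + D m m * (1 + t) ^ ((b + (m:ℝ)) / p) := by
    rw [jfpQ_expand α β b p hp m ht, Finset.sum_range_succ]
  have swap : ∑ x ∈ Finset.range (m + 1),
      ((D m m)⁻¹ * ∑ j ∈ Finset.range m, D j m * cs' j x) * jfpQ α β b p x t
      = (D m m)⁻¹ * ∑ j ∈ Finset.range m, D j m * (1 + t) ^ ((b + (j:ℝ)) / p) := by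
    simp only [Finset.sum_mul, Finset.mul_sum]
    rw [Finset.sum_comm]
    refine Finset.sum_congr rfl fun j hj => ?_
    rw [hcs' j (Finset.mem_range.1 hj) t ht, Finset.mul_sum, Finset.mul_sum]
    refine Finset.sum_congr rfl fun x _ => ?_
    ring
  rw [swap, expandD]
  field_simp
  ring

/-- `I^μ` maps the JFP basis to itself with lower bandwidth `k`. -/
theorem fracInt_jfp_lower_banded
    (α β : ℝ) (hα : -1 < α) (hβ : -1 < β)
    (μ p b : ℝ) (hμ : 0 < μ) (hp : 0 < p)
    (k : ℕ) (hk : 0 < k) (hμp : μ * p = k) (hb : -p < b) (n : ℕ) :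
    ∃ c : ℕ → ℝ, ∀ x ∈ Set.Ioc (-1 : ℝ) 1,
      fracInt μ (jfpQ α β b p n) x
        = ∑ m ∈ Finset.range (n + k + 1), c m * jfpQ α β b p m x := by
  classical
  obtain ⟨cc, hcc⟩ := Classical.axiomOfChoice (rpow_span α β b p hα hβ hp)
  set s : ℕ → ℝ := fun j => (b + j) / p with hs_def
  have hs : ∀ j : ℕ, -1 < s j := by
    intro j
    rw [hs_def]
    rw [lt_div_iff₀ hp]
    have : (0:ℝ) ≤ j := Nat.cast_nonneg j
    linarith
  set d : ℕ → ℝ := fun j => Ccoef α β j n * (2:ℝ) ^ ((1 - 1/p) * (b + j)) with hd_def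
  set B : ℕ → ℝ := fun j => ∫ v in (0:ℝ)..1, (1 - v) ^ (μ - 1) * v ^ (s j) with hB_def
  set ccP : ℕ → ℕ → ℝ := fun j i => if i ≤ j + k then cc (j + k) i else 0 with hccP_def
  refine ⟨fun i => ∑ j ∈ Finset.range (n + 1), (1 / Real.Gamma μ) * d j * B j * ccP j i,
    fun x hx => ?_⟩
  obtain ⟨hx1, hx2⟩ := hx
  have hμs : ∀ j : ℕ, μ + s j = (b + ((j + k : ℕ) : ℝ)) / p := by
    intro j
    have hμ' : μ = k / p := by
      field_simp
      linarith [hμp]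
    rw [hμ', hs_def]
    push_cast
    field_simp
    ring
  -- step 1 & 2: expand the integrand and integrate term by term
  have step1 : (∫ t in (-1:ℝ)..x, (x - t) ^ (μ - 1) * jfpQ α β b p n t)
      = ∑ j ∈ Finset.range (n + 1),
          d j * ((∫ v in (0:ℝ)..1, (1 - v) ^ (μ - 1) * v ^ (s j)) * (1 + x) ^ (μ + s j)) := by
    rw [intervalIntegral.integral_congr_ae (g := fun t =>
        ∑ j ∈ Finset.range (n + 1), d j * ((x - t) ^ (μ - 1) * (1 + t) ^ (s j)))]
    · rw [intervalIntegral.integral_finset_sum]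
      · refine Finset.sum_congr rfl fun j hj => ?_
        rw [intervalIntegral.integral_const_mul, kernel_integral hμ (hs j) hx1]
      · intro j hj
        exact (kernel_integrable hμ (hs j) hx1).const_mul (d j)
    · refine Filter.Eventually.of_forall fun t ht => ?_
      rw [Set.uIoc_of_le (by linarith)] at ht
      rw [jfpQ_expand α β b p hp n ht.1, Finset.mul_sum]
      refine Finset.sum_congr rfl fun j hj => ?_
      rw [hd_def, hs_def]
      ring
  have pad : ∀ j ∈ Finset.range (n + 1),
      (1 + x) ^ ((b + ((j + k : ℕ) : ℝ)) / p)
        = ∑ i ∈ Finset.range (n + k + 1), ccP j i * jfpQ α β b p i x := by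
    intro j hj
    rw [hcc (j + k) x hx1]
    have step : ∑ i ∈ Finset.range (n + k + 1), ccP j i * jfpQ α β b p i x
        = ∑ i ∈ Finset.range (j + k + 1), ccP j i * jfpQ α β b p i x := by
      symm
      apply Finset.sum_subset
      · apply Finset.range_subset_range.2
        have := Finset.mem_range.1 hj
        omega
      · intro i hi hni
        simp only [Finset.mem_range, Nat.lt_succ_iff, not_le] at hni
        simp [hccP_def, Nat.not_le.2 hni]
    rw [step]
    refine Finset.sum_congr rfl fun i hi => ?_
    simp only [Finset.mem_range, Nat.lt_succ_iff] at hi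
    simp [hccP_def, hi]
  have lhs_eq : ∀ j ∈ Finset.range (n + 1),
      1 / Real.Gamma μ * (d j * ((∫ v in (0:ℝ)..1, (1 - v) ^ (μ - 1) * v ^ (s j)) * (1 + x) ^ (μ + s j)))
        = ∑ i ∈ Finset.range (n + k + 1),
            1 / Real.Gamma μ * d j * B j * ccP j i * jfpQ α β b p i x := by
    intro j hj
    rw [hμs j, pad j hj]
    simp only [Finset.mul_sum, hB_def]
    exact Finset.sum_congr rfl fun i _ => by ring
  rw [fracInt, step1, Finset.mul_sum, Finset.sum_congr rfl lhs_eq, Finset.sum_comm]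
  exact Finset.sum_congr rfl fun m hm => by rw [Finset.sum_mul]
end

section
/- Let α, β > −1, b ∈ ℝ, let p be a positive integer, and let n ∈ ℕ. Then there exist real coefficients c_m for max(0, n−p) ≤ m ≤ n+p such that for every x ∈ (−1,1], x · Q_n^{(α,β,b,p)}(x) = Σ_{m=max(0,n−p)}^{n+p} c_m Q_m^{(α,β,b,p)}(x); that is, the matrix representing multiplication by x in the JFP basis has bandwidths (p, p). -/
noncomputable def Jf (α β : ℝ) (n : ℕ) (t : ℝ) : ℝ :=
  ∑ k ∈ Finset.range (n + 1), Ccoef α β k n * t ^ k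

lemma pochR (m : ℕ) (x : ℝ) :
    (ascPochhammer ℝ (m+1)).eval x = (ascPochhammer ℝ m).eval x * (x + m) := by
  simp [ascPochhammer_succ_right]

lemma pochL (m : ℕ) (x : ℝ) :
    (ascPochhammer ℝ (m+1)).eval x = x * (ascPochhammer ℝ m).eval (x + 1) := by
  simp [ascPochhammer_succ_left]

lemma Ccoef_eq_zero (α β : ℝ) {k n : ℕ} (h : n < k) : Ccoef α β k n = 0 := by
  simp [Ccoef, Nat.not_le.2 h]

lemma Jf_ext (α β : ℝ) (n N : ℕ) (h : n + 1 ≤ N) (t : ℝ) :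
    Jf α β n t = ∑ k ∈ Finset.range N, Ccoef α β k n * t ^ k := by
  refine Finset.sum_subset (Finset.range_subset_range.2 h) ?_
  intro k _ hk
  rw [Ccoef_eq_zero α β (by simpa using hk), zero_mul]

noncomputable def DDt (α β N : ℝ) : ℝ :=
  (2*N+α+β)*(2*N+α+β+1)*(2*N+α+β+2)
noncomputable def pAt (α β N : ℝ) : ℝ :=
  2*(N+1)*(N+α+β+1)*(2*N+α+β)
noncomputable def pBt (α β N : ℝ) : ℝ :=
  ((2*N+α+β)*(2*N+α+β+2)+(β-α)*(β+α))*(2*N+α+β+1)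
noncomputable def pCt (α β N : ℝ) : ℝ :=
  2*(N+α)*(N+β)*(2*N+α+β+2)

set_option maxHeartbeats 1000000 in
lemma Hgen (α β I J : ℝ) :
    DDt α β (I+1+J+1) * ((I+β+1)*(I+1+β+1+J)*(2*(I+1))*(I+1+J+1+α+β+1))
      = pAt α β (I+1+J+1) * ((I+1+β+1+J)*(I+1+β+1+J+1)
            *((I+1+J+1+α+β+1)+I)*((I+1+J+1+α+β+1)+I+1))
        - pBt α β (I+1+J+1) * ((I+1+β+1+J)*((I+1+J+1+α+β+1)+I)*(J+2)*(I+1+J+1+α+β+1))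
        + pCt α β (I+1+J+1) * ((I+1+J+α+β+1)*(J+2)*(J+1)*(I+1+J+1+α+β+1)) := by
  rw [DDt, pAt, pBt, pCt]; ring

set_option maxHeartbeats 1000000 in
set_option maxRecDepth 8000 in
lemma caseGen (α β : ℝ) (hα : -1 < α) (hβ : -1 < β) (i j : ℕ) :
    DDt α β ((↑(i+1+j):ℝ)+1) * Ccoef α β (i+1-1) (i+1+j+1)
      = pAt α β ((↑(i+1+j):ℝ)+1) * Ccoef α β (i+1) (i+1+j+1+1)
        + pBt α β ((↑(i+1+j):ℝ)+1) * Ccoef α β (i+1) (i+1+j+1)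
        + pCt α β ((↑(i+1+j):ℝ)+1) * Ccoef α β (i+1) (i+1+j) := by
  rw [show i+1-1 = i from rfl]
  rw [Ccoef, if_pos (by omega), Ccoef, if_pos (by omega), Ccoef, if_pos (by omega),
    Ccoef, if_pos (by omega)]
  rw [show i+1+j+1 - i = j+2 by omega, show i+1+j+1+1 - (i+1) = j+2 by omega,
    show i+1+j+1 - (i+1) = j+1 by omega, show i+1+j - (i+1) = j by omega]
  have h0i : (0:ℝ) ≤ (i:ℝ) := Nat.cast_nonneg i
  have h0j : (0:ℝ) ≤ (j:ℝ) := Nat.cast_nonneg j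
  have hW : ((i:ℝ)+1+(j:ℝ)+1+α+β+1) ≠ 0 := by nlinarith
  have g1 : (ascPochhammer ℝ (j+2)).eval ((i:ℝ)+β+1)
      = ((i:ℝ)+β+1) * ((ascPochhammer ℝ j).eval ((i:ℝ)+1+β+1) * ((i:ℝ)+1+β+1+(j:ℝ))) := by
    rw [show j+2 = (j+1)+1 from rfl, pochL (j+1), show ((i:ℝ)+β+1+1) = (i:ℝ)+1+β+1 by ring,
      pochR j]
  have g2 : (ascPochhammer ℝ (j+2)).eval ((i:ℝ)+1+β+1)
      = (ascPochhammer ℝ j).eval ((i:ℝ)+1+β+1) * ((i:ℝ)+1+β+1+(j:ℝ))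
          * ((i:ℝ)+1+β+1+(j:ℝ)+1) := by
    rw [show j+2 = (j+1)+1 from rfl, pochR (j+1), pochR j]
    push_cast; ring
  have g3 : (ascPochhammer ℝ (j+1)).eval ((i:ℝ)+1+β+1)
      = (ascPochhammer ℝ j).eval ((i:ℝ)+1+β+1) * ((i:ℝ)+1+β+1+(j:ℝ)) := pochR j _
  have h1 : (ascPochhammer ℝ (i+1)).eval ((i:ℝ)+1+(j:ℝ)+1+α+β+1)
      = (ascPochhammer ℝ i).eval ((i:ℝ)+1+(j:ℝ)+1+α+β+1)
          * ((i:ℝ)+1+(j:ℝ)+1+α+β+1+(i:ℝ)) := pochR i _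
  have h2 : (ascPochhammer ℝ (i+1)).eval ((i:ℝ)+1+(j:ℝ)+α+β+1)
      = ((i:ℝ)+1+(j:ℝ)+α+β+1) * (ascPochhammer ℝ i).eval ((i:ℝ)+1+(j:ℝ)+1+α+β+1) := by
    rw [pochL i, show ((i:ℝ)+1+(j:ℝ)+α+β+1+1) = (i:ℝ)+1+(j:ℝ)+1+α+β+1 by ring]
  have h3 : (ascPochhammer ℝ (i+1)).eval ((i:ℝ)+1+(j:ℝ)+1+1+α+β+1)
      = (ascPochhammer ℝ i).eval ((i:ℝ)+1+(j:ℝ)+1+α+β+1)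
          * (((i:ℝ)+1+(j:ℝ)+1+α+β+1)+(i:ℝ)) * (((i:ℝ)+1+(j:ℝ)+1+α+β+1)+(i:ℝ)+1)
          / ((i:ℝ)+1+(j:ℝ)+1+α+β+1) := by
    rw [eq_div_iff hW]
    have e1 := pochL (i+1) ((i:ℝ)+1+(j:ℝ)+1+α+β+1)
    rw [show ((i:ℝ)+1+(j:ℝ)+1+α+β+1+1) = (i:ℝ)+1+(j:ℝ)+1+1+α+β+1 by ring] at e1
    have e2 := pochR (i+1) ((i:ℝ)+1+(j:ℝ)+1+α+β+1)
    rw [pochR i] at e2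
    rw [e2] at e1
    push_cast at e1 ⊢
    linarith [e1]
  have hfj2 : (((j+2).factorial : ℕ) : ℝ) = ((j:ℝ)+2)*(((j:ℝ)+1)*(j.factorial : ℝ)) := by
    rw [show j+2 = (j+1)+1 from rfl, Nat.factorial_succ, Nat.factorial_succ]
    push_cast; ring
  have hfj1 : (((j+1).factorial : ℕ) : ℝ) = ((j:ℝ)+1)*(j.factorial : ℝ) := by
    rw [Nat.factorial_succ]; push_cast; ring
  have hfi1 : (((i+1).factorial : ℕ) : ℝ) = ((i:ℝ)+1)*(i.factorial : ℝ) := by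
    rw [Nat.factorial_succ]; push_cast; ring
  push_cast [hfj2, hfj1, hfi1]
  rw [g1, g2, g3, h1, h2, h3]
  have hfj : ((j.factorial :ℕ) : ℝ) ≠ 0 := Nat.cast_ne_zero.2 j.factorial_ne_zero
  have hfi : ((i.factorial :ℕ) : ℝ) ≠ 0 := Nat.cast_ne_zero.2 i.factorial_ne_zero
  have h2i : ((2:ℝ))^i ≠ 0 := by positivity
  have hj1 : ((j:ℝ)+1) ≠ 0 := by nlinarith
  have hj2 : ((j:ℝ)+2) ≠ 0 := by nlinarith
  have hi1 : ((i:ℝ)+1) ≠ 0 := by nlinarith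
  set E : ℝ := Polynomial.eval ((i:ℝ) + 1 + β + 1) (ascPochhammer ℝ j) with hE
  set H : ℝ := Polynomial.eval ((i:ℝ) + 1 + (j:ℝ) + 1 + α + β + 1) (ascPochhammer ℝ i) with hH
  have TL : DDt α β ((i:ℝ) + 1 + (j:ℝ) + 1) *
        ((-1:ℝ) ^ (j + 2) * (((i:ℝ) + β + 1) * (E * ((i:ℝ) + 1 + β + 1 + (j:ℝ)))) * H /
          (2 ^ i * (((j:ℝ) + 2) * (((j:ℝ) + 1) * (j.factorial:ℝ))) * (i.factorial:ℝ)))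
      = (-1:ℝ)^j * E * H * (DDt α β ((i:ℝ)+1+(j:ℝ)+1)
            * (((i:ℝ)+β+1)*((i:ℝ)+1+β+1+(j:ℝ))*(2*((i:ℝ)+1))*((i:ℝ)+1+(j:ℝ)+1+α+β+1)))
          / (2 ^ (i+1) * (((j:ℝ) + 2) * (((j:ℝ) + 1) * (j.factorial:ℝ)))
              * (((i:ℝ)+1) * (i.factorial:ℝ)) * ((i:ℝ)+1+(j:ℝ)+1+α+β+1)) := by
    field_simp
    ring
  have TA : pAt α β ((i:ℝ) + 1 + (j:ℝ) + 1) *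
        ((-1:ℝ) ^ (j + 2) * (E * ((i:ℝ) + 1 + β + 1 + (j:ℝ)) * ((i:ℝ) + 1 + β + 1 + (j:ℝ) + 1)) *
            (H * ((i:ℝ) + 1 + (j:ℝ) + 1 + α + β + 1 + (i:ℝ)) * ((i:ℝ) + 1 + (j:ℝ) + 1 + α + β + 1 + (i:ℝ) + 1) /
              ((i:ℝ) + 1 + (j:ℝ) + 1 + α + β + 1)) /
          (2 ^ (i + 1) * (((j:ℝ) + 2) * (((j:ℝ) + 1) * (j.factorial:ℝ))) * (((i:ℝ) + 1) * (i.factorial:ℝ))))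
      = (-1:ℝ)^j * E * H * (pAt α β ((i:ℝ)+1+(j:ℝ)+1)
            * (((i:ℝ)+1+β+1+(j:ℝ))*((i:ℝ)+1+β+1+(j:ℝ)+1)
              *(((i:ℝ)+1+(j:ℝ)+1+α+β+1)+(i:ℝ))*(((i:ℝ)+1+(j:ℝ)+1+α+β+1)+(i:ℝ)+1)))
          / (2 ^ (i+1) * (((j:ℝ) + 2) * (((j:ℝ) + 1) * (j.factorial:ℝ)))
              * (((i:ℝ)+1) * (i.factorial:ℝ)) * ((i:ℝ)+1+(j:ℝ)+1+α+β+1)) := by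
    field_simp
    ring
  have TB : pBt α β ((i:ℝ) + 1 + (j:ℝ) + 1) *
        ((-1:ℝ) ^ (j + 1) * (E * ((i:ℝ) + 1 + β + 1 + (j:ℝ))) *
            (H * ((i:ℝ) + 1 + (j:ℝ) + 1 + α + β + 1 + (i:ℝ))) /
          (2 ^ (i + 1) * (((j:ℝ) + 1) * (j.factorial:ℝ)) * (((i:ℝ) + 1) * (i.factorial:ℝ))))
      = (-1:ℝ)^j * E * H * (-(pBt α β ((i:ℝ)+1+(j:ℝ)+1)
            * (((i:ℝ)+1+β+1+(j:ℝ))*(((i:ℝ)+1+(j:ℝ)+1+α+β+1)+(i:ℝ))*((j:ℝ)+2)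
                *((i:ℝ)+1+(j:ℝ)+1+α+β+1))))
          / (2 ^ (i+1) * (((j:ℝ) + 2) * (((j:ℝ) + 1) * (j.factorial:ℝ)))
              * (((i:ℝ)+1) * (i.factorial:ℝ)) * ((i:ℝ)+1+(j:ℝ)+1+α+β+1)) := by
    field_simp
    ring
  have TC : pCt α β ((i:ℝ) + 1 + (j:ℝ) + 1) *
        ((-1:ℝ) ^ j * E * (((i:ℝ) + 1 + (j:ℝ) + α + β + 1) * H) /
          (2 ^ (i + 1) * (j.factorial:ℝ) * (((i:ℝ) + 1) * (i.factorial:ℝ))))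
      = (-1:ℝ)^j * E * H * (pCt α β ((i:ℝ)+1+(j:ℝ)+1)
            * (((i:ℝ)+1+(j:ℝ)+α+β+1)*((j:ℝ)+2)*((j:ℝ)+1)*((i:ℝ)+1+(j:ℝ)+1+α+β+1)))
          / (2 ^ (i+1) * (((j:ℝ) + 2) * (((j:ℝ) + 1) * (j.factorial:ℝ)))
              * (((i:ℝ)+1) * (i.factorial:ℝ)) * ((i:ℝ)+1+(j:ℝ)+1+α+β+1)) := by
    field_simp
  linear_combination TL - TA - TB - TC
    + ((-1:ℝ)^j * E * H / (2 ^ (i+1) * (((j:ℝ) + 2) * (((j:ℝ) + 1) * (j.factorial:ℝ)))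
        * (((i:ℝ)+1) * (i.factorial:ℝ)) * ((i:ℝ)+1+(j:ℝ)+1+α+β+1))) * Hgen α β (i:ℝ) (j:ℝ)

lemma Hzero (α β M : ℝ) :
    0 = pAt α β (M+1) * ((β+M+1)*(β+M+2)) - pBt α β (M+1) * ((β+M+1)*(M+2))
        + pCt α β (M+1) * ((M+2)*(M+1)) := by
  rw [pAt, pBt, pCt]; ring

lemma Hone (α β M : ℝ) :
    -(DDt α β (M+1) * ((M+β+1)*(2*(M+1))*(M+α+β+2)))
      = -(pAt α β (M+1) * ((M+β+2)*((M+α+β+2)+M)*((M+α+β+2)+M+1)))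
        + pBt α β (M+1) * (((M+α+β+2)+M)*(M+α+β+2)) := by
  rw [DDt, pAt, pBt]; ring

lemma Htop (α β M : ℝ) :
    DDt α β (M+1) * (((M+α+β+2)+M)*(2*(M+2))*(M+α+β+2))
      = pAt α β (M+1) * (((M+α+β+2)+M)*((M+α+β+2)+M+1)*((M+α+β+2)+M+2)) := by
  rw [DDt, pAt]; ring

set_option maxHeartbeats 1000000 in
set_option maxRecDepth 8000 in
lemma case0 (α β : ℝ) (hα : -1 < α) (hβ : -1 < β) (m : ℕ) :
    0 = pAt α β ((m:ℝ)+1) * Ccoef α β 0 (m+2) + pBt α β ((m:ℝ)+1) * Ccoef α β 0 (m+1)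
        + pCt α β ((m:ℝ)+1) * Ccoef α β 0 m := by
  rw [Ccoef, if_pos (by omega), Ccoef, if_pos (by omega), Ccoef, if_pos (by omega)]
  rw [show m+2-0 = m+2 from rfl, show m+1-0 = m+1 from rfl, show m-0 = m from rfl]
  have hfm2 : (((m+2).factorial : ℕ) : ℝ) = ((m:ℝ)+2)*(((m:ℝ)+1)*(m.factorial : ℝ)) := by
    rw [show m+2 = (m+1)+1 from rfl, Nat.factorial_succ, Nat.factorial_succ]
    push_cast; ring
  have hfm1 : (((m+1).factorial : ℕ) : ℝ) = ((m:ℝ)+1)*(m.factorial : ℝ) := by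
    rw [Nat.factorial_succ]; push_cast; ring
  push_cast [hfm2, hfm1]
  simp only [ascPochhammer_zero, Polynomial.eval_one, pow_zero, Nat.factorial_zero,
    Nat.cast_one, one_mul, mul_one]
  have e2 : (ascPochhammer ℝ (m+2)).eval (0+β+1)
      = (ascPochhammer ℝ m).eval (0+β+1) * ((β+(m:ℝ)+1) * (β+(m:ℝ)+2)) := by
    rw [show m+2 = (m+1)+1 from rfl, pochR (m+1), pochR m]
    push_cast; ring
  have e1 : (ascPochhammer ℝ (m+1)).eval (0+β+1)
      = (ascPochhammer ℝ m).eval (0+β+1) * (β+(m:ℝ)+1) := by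
    rw [pochR m]; ring
  rw [e2, e1]
  set E : ℝ := (ascPochhammer ℝ m).eval (0+β+1) with hE
  have hfm : ((m.factorial :ℕ) : ℝ) ≠ 0 := Nat.cast_ne_zero.2 m.factorial_ne_zero
  have hm1 : ((m:ℝ)+1) ≠ 0 := by positivity
  have hm2 : ((m:ℝ)+2) ≠ 0 := by positivity
  have TA : pAt α β ((m:ℝ)+1) * ((-1:ℝ)^(m+2) * (E * ((β+(m:ℝ)+1) * (β+(m:ℝ)+2)))
        / (((m:ℝ)+2) * (((m:ℝ)+1) * (m.factorial:ℝ))))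
      = (-1:ℝ)^m * E * (pAt α β ((m:ℝ)+1) * ((β+(m:ℝ)+1)*(β+(m:ℝ)+2)))
        / (((m:ℝ)+2) * (((m:ℝ)+1) * (m.factorial:ℝ))) := by
    field_simp; ring
  have TB : pBt α β ((m:ℝ)+1) * ((-1:ℝ)^(m+1) * (E * (β+(m:ℝ)+1))
        / (((m:ℝ)+1) * (m.factorial:ℝ)))
      = (-1:ℝ)^m * E * (-(pBt α β ((m:ℝ)+1) * ((β+(m:ℝ)+1)*((m:ℝ)+2))))
        / (((m:ℝ)+2) * (((m:ℝ)+1) * (m.factorial:ℝ))) := by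
    field_simp; ring
  have TC : pCt α β ((m:ℝ)+1) * ((-1:ℝ)^m * E / (m.factorial:ℝ))
      = (-1:ℝ)^m * E * (pCt α β ((m:ℝ)+1) * (((m:ℝ)+2)*((m:ℝ)+1)))
        / (((m:ℝ)+2) * (((m:ℝ)+1) * (m.factorial:ℝ))) := by
    field_simp
  linear_combination - TA - TB - TC
    + ((-1:ℝ)^m * E / (((m:ℝ)+2) * (((m:ℝ)+1) * (m.factorial:ℝ)))) * Hzero α β (m:ℝ)

set_option maxHeartbeats 1000000 in
set_option maxRecDepth 8000 in
lemma caseN (α β : ℝ) (hα : -1 < α) (hβ : -1 < β) (m : ℕ) :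
    DDt α β ((m:ℝ)+1) * Ccoef α β (m+1-1) (m+1)
      = pAt α β ((m:ℝ)+1) * Ccoef α β (m+1) (m+2) + pBt α β ((m:ℝ)+1) * Ccoef α β (m+1) (m+1)
        + pCt α β ((m:ℝ)+1) * Ccoef α β (m+1) m := by
  rw [show m+1-1 = m from rfl]
  rw [Ccoef, if_pos (by omega), Ccoef, if_pos (by omega), Ccoef, if_pos (by omega),
    Ccoef, if_neg (by omega)]
  rw [show m+1-m = 1 by omega, show m+2-(m+1) = 1 by omega, show m+1-(m+1) = 0 by omega]
  have hfm1 : (((m+1).factorial : ℕ) : ℝ) = ((m:ℝ)+1)*(m.factorial : ℝ) := by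
    rw [Nat.factorial_succ]; push_cast; ring
  push_cast [hfm1]
  simp only [ascPochhammer_zero, Polynomial.eval_one, ascPochhammer_one, Polynomial.eval_X,
    Nat.factorial_zero, Nat.factorial_one, Nat.cast_one, one_mul, mul_one, pow_zero, pow_one]
  have h0m : (0:ℝ) ≤ (m:ℝ) := Nat.cast_nonneg m
  have hW0 : ((m:ℝ)+1+α+β+1) ≠ 0 := by nlinarith
  have hA : (ascPochhammer ℝ (m+1)).eval ((m:ℝ)+2+α+β+1)
      = (ascPochhammer ℝ m).eval ((m:ℝ)+1+α+β+1)
          * (((m:ℝ)+1+α+β+1)+(m:ℝ)) * (((m:ℝ)+1+α+β+1)+(m:ℝ)+1) / ((m:ℝ)+1+α+β+1) := by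
    rw [eq_div_iff hW0]
    have e1 := pochL (m+1) ((m:ℝ)+1+α+β+1)
    rw [show ((m:ℝ)+1+α+β+1+1) = (m:ℝ)+2+α+β+1 by ring] at e1
    have e2 := pochR (m+1) ((m:ℝ)+1+α+β+1)
    rw [pochR m] at e2
    rw [e2] at e1
    push_cast at e1 ⊢
    linarith [e1]
  have hB : (ascPochhammer ℝ (m+1)).eval ((m:ℝ)+1+α+β+1)
      = (ascPochhammer ℝ m).eval ((m:ℝ)+1+α+β+1) * (((m:ℝ)+1+α+β+1)+(m:ℝ)) := pochR m _
  rw [hA, hB]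
  set H : ℝ := (ascPochhammer ℝ m).eval ((m:ℝ)+1+α+β+1) with hH
  have hfm : ((m.factorial :ℕ) : ℝ) ≠ 0 := Nat.cast_ne_zero.2 m.factorial_ne_zero
  have hm1 : ((m:ℝ)+1) ≠ 0 := by positivity
  have h2m : ((2:ℝ))^m ≠ 0 := by positivity
  have TL : DDt α β ((m:ℝ)+1) * (-1 * ((m:ℝ)+β+1) * H / (2^m * (m.factorial:ℝ)))
      = H * (-(DDt α β ((m:ℝ)+1) * (((m:ℝ)+β+1)*(2*((m:ℝ)+1))*((m:ℝ)+α+β+2))))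
        / (2^(m+1) * (((m:ℝ)+1) * (m.factorial:ℝ)) * ((m:ℝ)+1+α+β+1)) := by
    field_simp; ring
  have TA : pAt α β ((m:ℝ)+1) * (-1 * ((m:ℝ)+1+β+1)
        * (H * (((m:ℝ)+1+α+β+1)+(m:ℝ)) * (((m:ℝ)+1+α+β+1)+(m:ℝ)+1) / ((m:ℝ)+1+α+β+1))
        / (2^(m+1) * (((m:ℝ)+1) * (m.factorial:ℝ))))
      = H * (-(pAt α β ((m:ℝ)+1)
            * (((m:ℝ)+β+2)*(((m:ℝ)+α+β+2)+(m:ℝ))*(((m:ℝ)+α+β+2)+(m:ℝ)+1))))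
        / (2^(m+1) * (((m:ℝ)+1) * (m.factorial:ℝ)) * ((m:ℝ)+1+α+β+1)) := by
    field_simp; ring
  have TB : pBt α β ((m:ℝ)+1) * (H * (((m:ℝ)+1+α+β+1)+(m:ℝ))
        / (2^(m+1) * (((m:ℝ)+1) * (m.factorial:ℝ))))
      = H * (pBt α β ((m:ℝ)+1) * ((((m:ℝ)+α+β+2)+(m:ℝ))*((m:ℝ)+α+β+2)))
        / (2^(m+1) * (((m:ℝ)+1) * (m.factorial:ℝ)) * ((m:ℝ)+1+α+β+1)) := by
    field_simp; ring
  linear_combination TL - TA - TB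
    + (H / (2^(m+1) * (((m:ℝ)+1) * (m.factorial:ℝ)) * ((m:ℝ)+1+α+β+1))) * Hone α β (m:ℝ)

set_option maxHeartbeats 1000000 in
set_option maxRecDepth 8000 in
lemma caseTop (α β : ℝ) (hα : -1 < α) (hβ : -1 < β) (m : ℕ) :
    DDt α β ((m:ℝ)+1) * Ccoef α β (m+2-1) (m+1)
      = pAt α β ((m:ℝ)+1) * Ccoef α β (m+2) (m+2) + pBt α β ((m:ℝ)+1) * Ccoef α β (m+2) (m+1)
        + pCt α β ((m:ℝ)+1) * Ccoef α β (m+2) m := by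
  rw [show m+2-1 = m+1 from rfl]
  rw [Ccoef, if_pos (by omega), Ccoef, if_pos (by omega),
    Ccoef_eq_zero α β (show m+1 < m+2 by omega), Ccoef_eq_zero α β (show m < m+2 by omega)]
  rw [show m+1-(m+1) = 0 by omega, show m+2-(m+2) = 0 by omega]
  have hfm2 : (((m+2).factorial : ℕ) : ℝ) = ((m:ℝ)+2)*(((m:ℝ)+1)*(m.factorial : ℝ)) := by
    rw [show m+2 = (m+1)+1 from rfl, Nat.factorial_succ, Nat.factorial_succ]
    push_cast; ring
  have hfm1 : (((m+1).factorial : ℕ) : ℝ) = ((m:ℝ)+1)*(m.factorial : ℝ) := by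
    rw [Nat.factorial_succ]; push_cast; ring
  push_cast [hfm2, hfm1]
  simp only [ascPochhammer_zero, Polynomial.eval_one, Nat.factorial_zero, Nat.cast_one,
    one_mul, mul_one, pow_zero]
  have h0m : (0:ℝ) ≤ (m:ℝ) := Nat.cast_nonneg m
  have hW0 : ((m:ℝ)+1+α+β+1) ≠ 0 := by nlinarith
  have hA : (ascPochhammer ℝ (m+2)).eval ((m:ℝ)+2+α+β+1)
      = (ascPochhammer ℝ m).eval ((m:ℝ)+1+α+β+1)
          * (((m:ℝ)+1+α+β+1)+(m:ℝ)) * (((m:ℝ)+1+α+β+1)+(m:ℝ)+1)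
          * (((m:ℝ)+1+α+β+1)+(m:ℝ)+2) / ((m:ℝ)+1+α+β+1) := by
    rw [eq_div_iff hW0]
    have e1 := pochL (m+2) ((m:ℝ)+1+α+β+1)
    rw [show ((m:ℝ)+1+α+β+1+1) = (m:ℝ)+2+α+β+1 by ring] at e1
    have e2 := pochR (m+2) ((m:ℝ)+1+α+β+1)
    rw [pochR (m+1), pochR m] at e2
    rw [e2] at e1
    push_cast at e1 ⊢
    linarith [e1]
  have hL : (ascPochhammer ℝ (m+1)).eval ((m:ℝ)+1+α+β+1)
      = (ascPochhammer ℝ m).eval ((m:ℝ)+1+α+β+1) * (((m:ℝ)+1+α+β+1)+(m:ℝ)) := pochR m _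
  rw [hA, hL]
  set H : ℝ := (ascPochhammer ℝ m).eval ((m:ℝ)+1+α+β+1) with hH
  have hfm : ((m.factorial :ℕ) : ℝ) ≠ 0 := Nat.cast_ne_zero.2 m.factorial_ne_zero
  have hm1 : ((m:ℝ)+1) ≠ 0 := by positivity
  have hm2 : ((m:ℝ)+2) ≠ 0 := by positivity
  have h2m : ((2:ℝ))^m ≠ 0 := by positivity
  have TL : DDt α β ((m:ℝ)+1) * (H * (((m:ℝ)+1+α+β+1)+(m:ℝ))
        / (2^(m+1) * (((m:ℝ)+1) * (m.factorial:ℝ))))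
      = H * (DDt α β ((m:ℝ)+1) * ((((m:ℝ)+α+β+2)+(m:ℝ))*(2*((m:ℝ)+2))*((m:ℝ)+α+β+2)))
        / (2^(m+2) * (((m:ℝ)+2) * (((m:ℝ)+1) * (m.factorial:ℝ))) * ((m:ℝ)+1+α+β+1)) := by
    field_simp; ring
  have TA : pAt α β ((m:ℝ)+1) * (H * (((m:ℝ)+1+α+β+1)+(m:ℝ)) * (((m:ℝ)+1+α+β+1)+(m:ℝ)+1)
        * (((m:ℝ)+1+α+β+1)+(m:ℝ)+2) / ((m:ℝ)+1+α+β+1)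
        / (2^(m+2) * (((m:ℝ)+2) * (((m:ℝ)+1) * (m.factorial:ℝ)))))
      = H * (pAt α β ((m:ℝ)+1)
            * ((((m:ℝ)+α+β+2)+(m:ℝ))*(((m:ℝ)+α+β+2)+(m:ℝ)+1)*(((m:ℝ)+α+β+2)+(m:ℝ)+2)))
        / (2^(m+2) * (((m:ℝ)+2) * (((m:ℝ)+1) * (m.factorial:ℝ))) * ((m:ℝ)+1+α+β+1)) := by
    field_simp; ring
  linear_combination TL - TA
    + (H / (2^(m+2) * (((m:ℝ)+2) * (((m:ℝ)+1) * (m.factorial:ℝ))) * ((m:ℝ)+1+α+β+1)))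
        * Htop α β (m:ℝ)

lemma coefid (α β : ℝ) (hα : -1 < α) (hβ : -1 < β) (m k : ℕ) (hk : k ≤ m+2) :
    DDt α β ((m:ℝ)+1) * (if k = 0 then 0 else Ccoef α β (k-1) (m+1))
      = pAt α β ((m:ℝ)+1) * Ccoef α β k (m+2) + pBt α β ((m:ℝ)+1) * Ccoef α β k (m+1)
        + pCt α β ((m:ℝ)+1) * Ccoef α β k m := by
  by_cases hk0 : k = 0
  · subst hk0
    rw [if_pos rfl, mul_zero]
    exact case0 α β hα hβ m
  · obtain ⟨i, rfl⟩ : ∃ i, k = i + 1 := ⟨k - 1, by omega⟩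
    rw [if_neg (by omega)]
    by_cases hktop : i + 1 = m + 2
    · obtain rfl : i = m + 1 := by omega
      exact caseTop α β hα hβ _
    · by_cases hkn : i + 1 = m + 1
      · obtain rfl : i = m := by omega
        exact caseN α β hα hβ _
      · obtain ⟨j, rfl⟩ : ∃ j, m = i + 1 + j := ⟨m - i - 1, by omega⟩
        exact caseGen α β hα hβ i j

lemma threeterm (α β : ℝ) (hα : -1 < α) (hβ : -1 < β) (n : ℕ) :
    ∃ A B C : ℝ, ∀ t : ℝ,
      t * Jf α β n t = A * Jf α β (n+1) t + B * Jf α β n t + C * Jf α β (n-1) t := by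
  rcases n with _ | m
  · refine ⟨2/(α+β+2), 2*(β+1)/(α+β+2), 0, fun t => ?_⟩
    have h2 : α+β+2 ≠ 0 := by nlinarith
    simp only [Jf, Ccoef, Finset.sum_range_succ, Finset.sum_range_zero]
    norm_num [ascPochhammer_zero, ascPochhammer_one, Nat.factorial]
    field_simp
    ring
  · have h0m : (0:ℝ) ≤ (m:ℝ) := Nat.cast_nonneg m
    have hDD : DDt α β ((m:ℝ)+1) ≠ 0 := by
      rw [DDt]
      have e0 : 2*((m:ℝ)+1)+α+β > 0 := by nlinarith
      have e1 : 2*((m:ℝ)+1)+α+β+1 > 0 := by nlinarith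
      have e2 : 2*((m:ℝ)+1)+α+β+2 > 0 := by nlinarith
      positivity
    set A : ℝ := pAt α β ((m:ℝ)+1) / DDt α β ((m:ℝ)+1) with hA
    set B : ℝ := pBt α β ((m:ℝ)+1) / DDt α β ((m:ℝ)+1) with hB
    set C : ℝ := pCt α β ((m:ℝ)+1) / DDt α β ((m:ℝ)+1) with hC
    refine ⟨A, B, C, fun t => ?_⟩
    have hcoef : ∀ k, k ≤ m+2 → (if k = 0 then 0 else Ccoef α β (k-1) (m+1))
        = A * Ccoef α β k (m+2) + B * Ccoef α β k (m+1) + C * Ccoef α β k m := by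
      intro k hk
      have h := coefid α β hα hβ m k hk
      rw [hA, hB, hC, div_mul_eq_mul_div, div_mul_eq_mul_div, div_mul_eq_mul_div,
        ← add_div, ← add_div, eq_div_iff hDD]
      linear_combination h
    calc t * Jf α β (m+1) t
        = ∑ k ∈ Finset.range (m+2), Ccoef α β k (m+1) * t^(k+1) := by
          rw [Jf, Finset.mul_sum]
          exact Finset.sum_congr rfl fun k _ => by ring
      _ = ∑ k ∈ Finset.range (m+3),
            (if k = 0 then 0 else Ccoef α β (k-1) (m+1)) * t^k := by
          rw [Finset.sum_range_succ'
            (f := fun k => (if k = 0 then 0 else Ccoef α β (k-1) (m+1)) * t^k) (n := m+2)]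
          simp
      _ = ∑ k ∈ Finset.range (m+3),
            (A * Ccoef α β k (m+2) + B * Ccoef α β k (m+1)
              + C * Ccoef α β k m) * t^k := by
          refine Finset.sum_congr rfl fun k hkk => ?_
          rw [hcoef k (by simpa using Nat.lt_succ_iff.mp (Finset.mem_range.mp hkk))]
      _ = A * Jf α β (m+1+1) t + B * Jf α β (m+1) t
            + C * Jf α β (m+1-1) t := by
          rw [show m+1+1 = m+2 from rfl, show m+1-1 = m from rfl,
            Jf_ext α β (m+2) (m+3) (by omega) t, Jf_ext α β (m+1) (m+3) (by omega) t,
            Jf_ext α β m (m+3) (by omega) t, Finset.mul_sum, Finset.mul_sum, Finset.mul_sum,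
            ← Finset.sum_add_distrib, ← Finset.sum_add_distrib]
          exact Finset.sum_congr rfl fun k _ => by ring

lemma pow_mul_Jf (α β : ℝ) (hα : -1 < α) (hβ : -1 < β) (j n : ℕ) :
    ∃ e : ℕ → ℝ, ∀ t : ℝ,
      t ^ j * Jf α β n t = ∑ m ∈ Finset.Icc (n - j) (n + j), e m * Jf α β m t := by
  induction j with
  | zero =>
      exact ⟨fun m => if m = n then 1 else 0, fun t => by simp [Jf]⟩
  | succ j IH =>
      obtain ⟨e, he⟩ := IH
      choose A B C hABC using threeterm α β hα hβ
      set a := n - j with ha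
      set bnd := n + j with hb
      set d : ℕ → ℕ → ℝ := fun m r =>
        (if m + 1 = r then A m else 0) + (if m = r then B m else 0)
          + (if m - 1 = r then C m else 0) with hd
      refine ⟨fun r => ∑ m ∈ Finset.Icc a bnd, e m * d m r, fun t => ?_⟩
      have key : ∀ m ∈ Finset.Icc a bnd,
          t * Jf α β m t = ∑ r ∈ Finset.Icc (n - (j+1)) (n + (j+1)), d m r * Jf α β r t := by
        intro m hm
        rw [Finset.mem_Icc] at hm
        have h1 : m + 1 ∈ Finset.Icc (n - (j+1)) (n + (j+1)) := by
          rw [Finset.mem_Icc]; omega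
        have h2 : m ∈ Finset.Icc (n - (j+1)) (n + (j+1)) := by
          rw [Finset.mem_Icc]; omega
        have h3 : m - 1 ∈ Finset.Icc (n - (j+1)) (n + (j+1)) := by
          rw [Finset.mem_Icc]; omega
        simp only [hd, add_mul, Finset.sum_add_distrib, ite_mul, zero_mul,
          Finset.sum_ite_eq, h1, h2, h3, if_true, if_pos]
        exact hABC m t
      calc t ^ (j+1) * Jf α β n t = t * (t ^ j * Jf α β n t) := by ring
        _ = t * ∑ m ∈ Finset.Icc a bnd, e m * Jf α β m t := by rw [he]
        _ = ∑ m ∈ Finset.Icc a bnd, e m * (t * Jf α β m t) := by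
              rw [Finset.mul_sum]; exact Finset.sum_congr rfl fun m _ => by ring
        _ = ∑ m ∈ Finset.Icc a bnd,
              e m * ∑ r ∈ Finset.Icc (n - (j+1)) (n + (j+1)), d m r * Jf α β r t := by
              exact Finset.sum_congr rfl fun m hm => by rw [key m hm]
        _ = ∑ m ∈ Finset.Icc a bnd,
              ∑ r ∈ Finset.Icc (n - (j+1)) (n + (j+1)), e m * d m r * Jf α β r t := by
              exact Finset.sum_congr rfl fun m _ => by
                rw [Finset.mul_sum]; exact Finset.sum_congr rfl fun r _ => by ring
        _ = ∑ r ∈ Finset.Icc (n - (j+1)) (n + (j+1)),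
              ∑ m ∈ Finset.Icc a bnd, e m * d m r * Jf α β r t := Finset.sum_comm
        _ = ∑ r ∈ Finset.Icc (n - (j+1)) (n + (j+1)),
              (∑ m ∈ Finset.Icc a bnd, e m * d m r) * Jf α β r t := by
              exact Finset.sum_congr rfl fun r _ => by rw [Finset.sum_mul]

/-- multiplication by `x` in the JFP basis has bandwidths `(p, p)`. -/
theorem jfp_mul_x_banded
    (α β : ℝ) (hα : -1 < α) (hβ : -1 < β) (b : ℝ) (p : ℕ) (hp : 0 < p) (n : ℕ) :
    ∃ c : ℕ → ℝ, ∀ x ∈ Set.Ioc (-1 : ℝ) 1,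
      x * jfpQ α β b p n x
        = ∑ m ∈ Finset.Icc (n - p) (n + p), c m * jfpQ α β b p m x := by
  obtain ⟨e, he⟩ := pow_mul_Jf α β hα hβ p n
  refine ⟨fun m => e m / 2 ^ (p-1) - if m = n then 1 else 0, fun x hx => ?_⟩
  obtain ⟨hx1, _⟩ := hx
  have hpne : (p:ℝ) ≠ 0 := Nat.cast_ne_zero.2 hp.ne'
  have ht0 : (0:ℝ) < (1 + x)/2 := by linarith
  set u : ℝ := 2 * ((1 + x) / 2) ^ (1/(p:ℝ)) with hu
  have hup : u ^ p = 2 ^ p * ((1+x)/2) := by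
    rw [hu, mul_pow, ← Real.rpow_natCast (((1+x)/2) ^ (1/(p:ℝ))) p,
      ← Real.rpow_mul ht0.le, one_div, inv_mul_cancel₀ hpne, Real.rpow_one]
  have h2ne : (2:ℝ)^(p-1) ≠ 0 := by positivity
  have h2p : (2:ℝ) ^ p = 2 ^ (p-1) * 2 := by
    rw [← pow_succ]; congr 1; omega
  have hX : u ^ p / 2 ^ (p-1) - 1 = x := by
    rw [hup, h2p]; field_simp; ring
  have hjf : ∀ M, jfpQ α β b p M x = u ^ b * Jf α β M u := by
    intro M
    rw [jfpQ, ← hu]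
    congr 1
    refine Finset.sum_congr rfl fun k _ => ?_
    rw [show 1 + (u - 1) = u by ring]
  simp only [hjf]
  have hmem : n ∈ Finset.Icc (n - p) (n + p) := by rw [Finset.mem_Icc]; omega
  calc x * (u^b * Jf α β n u)
      = (u^p/2^(p-1) - 1) * (u^b * Jf α β n u) := by rw [hX]
    _ = (u^p * Jf α β n u) * u^b / 2^(p-1) - u^b * Jf α β n u := by ring
    _ = (∑ m ∈ Finset.Icc (n - p) (n + p), e m * Jf α β m u) * u^b / 2^(p-1)
          - u^b * Jf α β n u := by rw [he u]
    _ = ∑ m ∈ Finset.Icc (n - p) (n + p), (e m / 2^(p-1)) * (u^b * Jf α β m u)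
          - ∑ m ∈ Finset.Icc (n - p) (n + p),
              (if m = n then 1 else 0) * (u^b * Jf α β m u) := by
        rw [Finset.sum_mul, Finset.sum_div]
        congr 1
        · exact Finset.sum_congr rfl fun m _ => by ring
        · simp only [ite_mul, one_mul, zero_mul, Finset.sum_ite_eq', hmem, if_pos]
    _ = ∑ m ∈ Finset.Icc (n - p) (n + p),
          (e m / 2^(p-1) - if m = n then 1 else 0) * (u^b * Jf α β m u) := by
        rw [← Finset.sum_sub_distrib]
        exact Finset.sum_congr rfl fun m _ => by ring
end

section
/- Let α, β > −1, let p be a positive integer, let μ > 0 with μp = k a positive integer, and let b > −p be such that β − b and b + p − 1 − β are nonnegative integers. Let A_{m,n} be the coefficients with I^μ[Q_n^{(α,β,b,p)}] = Σ_{m=0}^{n+k} A_{m,n} Q_m^{(α,β,b,p)} on (−1,1] (A_{m,n} = 0 for m > n+k); let X_{m,n} be the coefficients with x·Q_n^{(α,β,b,p)}(x) = Σ_m X_{m,n} Q_m^{(α,β,b,p)}(x) (X_{m,n} = 0 unless |m−n| ≤ p); and let J_{m,n} be the coefficients with ∫_{−1}^{x} Q_n^{(α,β,b,p)}(t) dt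 = Σ_m J_{m,n} Q_m^{(α,β,b,p)}(x) (J_{m,n} = 0 unless |m−n| ≤ p). Then the fractional integration matrix satisfies the Sylvester equation A(X + μJ) = XA entrywise: for all m, n ∈ ℕ, Σ_j A_{m,j}(X_{j,n} + μ J_{j,n}) = Σ_j X_{m,j} A_{j,n}, where both sums have only finitely many nonzero terms. -/
open MeasureTheory

section SylvesterAux

open Set Polynomial intervalIntegral

section CVars
variable (α β b : ℝ) (p : ℕ)

noncomputable def QB (α β b : ℝ) (n : ℕ) : ℝ :=
  (2:ℝ) ^ b * ∑ k ∈ Finset.range (n+1), |Ccoef α β k n| * 2 ^ k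

lemma QB_nonneg (n : ℕ) : 0 ≤ QB α β b n := by
  unfold QB
  apply mul_nonneg (Real.rpow_nonneg (by norm_num) _)
  apply Finset.sum_nonneg; intro k _; positivity

lemma abs_jacobiP_le (n : ℕ) {y : ℝ} (h1 : -1 < y) (h2 : y ≤ 1) :
    |jacobiP α β n y| ≤ ∑ k ∈ Finset.range (n+1), |Ccoef α β k n| * 2 ^ k := by
  refine (Finset.abs_sum_le_sum_abs _ _).trans ?_
  apply Finset.sum_le_sum; intro k _
  rw [abs_mul, abs_pow]
  apply mul_le_mul_of_nonneg_left _ (abs_nonneg _)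
  apply pow_le_pow_left₀ (abs_nonneg _)
  rw [abs_of_pos (by linarith)]; linarith

lemma abs_jfpQ_le (hp : 0 < p) (n : ℕ) {t : ℝ} (ht : t ∈ Set.Ioc (-1:ℝ) 1) :
    |jfpQ α β b p n t| ≤ QB α β b n * ((1+t)/2) ^ (b / p) := by
  have hw0 : (0:ℝ) < (1 + t) / 2 := by have := ht.1; linarith
  have hw1 : (1 + t) / 2 ≤ 1 := by have := ht.2; linarith
  have hppos : (0:ℝ) < 1/(p:ℝ) := by positivity
  set v : ℝ := ((1 + t)/2) ^ (1/(p:ℝ)) with hv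
  have hv0 : 0 < v := Real.rpow_pos_of_pos hw0 _
  have hv1 : v ≤ 1 := Real.rpow_le_one hw0.le hw1 hppos.le
  have hy1 : (-1:ℝ) < 2 * v - 1 := by linarith
  have hy2 : 2 * v - 1 ≤ 1 := by linarith
  have h2v : (2 * v) ^ b = 2 ^ b * ((1+t)/2) ^ (b / (p:ℝ)) := by
    rw [Real.mul_rpow (by norm_num) hv0.le, hv, ← Real.rpow_mul hw0.le]
    congr 1; ring
  calc |jfpQ α β b p n t| = (2*v)^b * |jacobiP α β n (2*v-1)| := by
        rw [jfpQ, abs_mul, abs_of_nonneg (Real.rpow_nonneg (by positivity) _)]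
    _ ≤ (2*v)^b * ∑ k ∈ Finset.range (n+1), |Ccoef α β k n| * 2 ^ k := by
        apply mul_le_mul_of_nonneg_left (abs_jacobiP_le α β n hy1 hy2)
          (Real.rpow_nonneg (by positivity) _)
    _ = QB α β b n * ((1+t)/2) ^ (b / p) := by rw [h2v, QB]; ring

end CVars

-- helper: bounding rpow on an interval
lemma rpow_max_bound {a b c s : ℝ} (ha : 0 < a) (hs : s ∈ Set.Icc a b) :
    s ^ c ≤ max (a ^ c) (b ^ c) := by
  rcases le_or_gt 0 c with h | h
  · exact le_max_of_le_right (Real.rpow_le_rpow (ha.le.trans hs.1) hs.2 h)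
  · exact le_max_of_le_left (Real.rpow_le_rpow_of_nonpos ha hs.1 h.le)

lemma II_shift {c : ℝ} (hc : -1 < c) (a b : ℝ) :
    IntervalIntegrable (fun t : ℝ => ((1 + t)/2) ^ c) volume a b := by
  have h0 : IntervalIntegrable (fun s : ℝ => s ^ c) volume ((a+1)*(1/2)) ((b+1)*(1/2)) :=
    intervalIntegral.intervalIntegrable_rpow' hc
  have h1 := h0.comp_mul_right (c := 1/2)
  have h2 := h1.comp_add_right 1
  have hfg : (fun t : ℝ => ((1 + t)/2) ^ c) = fun t : ℝ => ((t + 1) * (1/2)) ^ c := by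
    funext t; congr 1; ring
  rw [hfg]
  convert h2 using 1 <;> field_simp <;> ring

lemma II_ker {c : ℝ} (hc : -1 < c) (x a b : ℝ) :
    IntervalIntegrable (fun t : ℝ => (x - t) ^ c) volume a b := by
  have h0 : IntervalIntegrable (fun s : ℝ => s ^ c) volume (x - a) (x - b) :=
    intervalIntegral.intervalIntegrable_rpow' hc
  simpa using h0.comp_sub_left x


lemma cont_jacobiP (α β : ℝ) (n : ℕ) : Continuous (jacobiP α β n) := by
  unfold jacobiP; fun_prop

lemma contAt_jfpQ (α β b : ℝ) (p : ℕ) (n : ℕ) {t : ℝ} (ht : -1 < t) :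
    ContinuousAt (jfpQ α β b p n) t := by
  have hw : (0:ℝ) < (1 + t) / 2 := by linarith
  have hbase : ContinuousAt (fun s : ℝ => 2 * ((1 + s)/2) ^ (1/(p:ℝ))) t := by
    exact continuousAt_const.mul
      (ContinuousAt.rpow_const (by fun_prop) (Or.inl (ne_of_gt hw)))
  have h2 : (0:ℝ) < 2 * ((1 + t)/2) ^ (1/(p:ℝ)) := by
    have := Real.rpow_pos_of_pos hw (1/(p:ℝ)); linarith
  exact (hbase.rpow_const (Or.inl (ne_of_gt h2))).mul
    (((cont_jacobiP α β n).continuousAt).comp (hbase.sub continuousAt_const))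

lemma aesm_of_contOn_Ioo {f : ℝ → ℝ} {a b : ℝ} (h : ContinuousOn f (Set.Ioo a b)) :
    AEStronglyMeasurable f (volume.restrict (Set.Ioc a b)) := by
  rw [← Measure.restrict_congr_set MeasureTheory.Ioo_ae_eq_Ioc]
  exact h.aestronglyMeasurable measurableSet_Ioo

lemma contOn_jfpQ (α β b : ℝ) (p : ℕ) (n : ℕ) {a c : ℝ} (ha : -1 ≤ a) :
    ContinuousOn (jfpQ α β b p n) (Set.Ioo a c) := fun t ht =>
  (contAt_jfpQ α β b p n (lt_of_le_of_lt ha ht.1)).continuousWithinAt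

lemma contOn_ker {x ν : ℝ} {a : ℝ} : ContinuousOn (fun t : ℝ => (x - t) ^ ν) (Set.Ioo a x) := by
  intro t ht
  exact (ContinuousAt.rpow_const (by fun_prop) (Or.inl (by simp [sub_ne_zero]; linarith [ht.2]))).continuousWithinAt


section
variable {α β b : ℝ} {p : ℕ}

lemma hbp {b : ℝ} {p : ℕ} (hp : 0 < p) (hb : -(p:ℝ) < b) : (-1:ℝ) < b / p := by
  have hp' : (0:ℝ) < p := Nat.cast_pos.mpr hp
  rw [lt_div_iff₀ hp']; linarith

lemma II_jfpQ (hp : 0 < p) (hb : -(p:ℝ) < b) (n : ℕ) {x : ℝ} (hx : x ∈ Set.Ioc (-1:ℝ) 1) :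
    IntervalIntegrable (jfpQ α β b p n) volume (-1) x := by
  have hΙ : Set.uIoc (-1:ℝ) x = Set.Ioc (-1:ℝ) x := Set.uIoc_of_le hx.1.le
  apply IntervalIntegrable.mono_fun' ((II_shift (hbp hp hb) (-1) x).const_mul (QB α β b n))
  · rw [hΙ]; exact aesm_of_contOn_Ioo (contOn_jfpQ α β b p n le_rfl)
  · rw [Filter.EventuallyLE, hΙ, ae_restrict_iff' measurableSet_Ioc]
    apply Filter.Eventually.of_forall
    intro t ht
    exact abs_jfpQ_le α β b p hp n ⟨ht.1, ht.2.trans hx.2⟩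

lemma II_ker_jfpQ (hp : 0 < p) (hb : -(p:ℝ) < b) (n : ℕ) {x : ℝ} (hx : x ∈ Set.Ioc (-1:ℝ) 1)
    {ν : ℝ} (hν : -1 < ν) :
    IntervalIntegrable (fun t => (x - t) ^ ν * jfpQ α β b p n t) volume (-1) x := by
  set c : ℝ := (x - 1) / 2 with hc
  have hc1 : (-1:ℝ) < c := by rw [hc]; have := hx.1; linarith
  have hcx : c < x := by rw [hc]; have := hx.1; linarith
  have hcont : ∀ a : ℝ, ContinuousOn (fun t => (x - t) ^ ν * jfpQ α β b p n t) (Set.Ioo a x) →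
      True := fun _ _ => trivial
  have hcont1 : ContinuousOn (fun t => (x - t) ^ ν * jfpQ α β b p n t) (Set.Ioo (-1) x) :=
    contOn_ker.mul (contOn_jfpQ α β b p n le_rfl)
  apply IntervalIntegrable.trans (b := c)
  · -- on (-1, c]: kernel bounded, jfpQ integrable
    set K0 : ℝ := max ((x - c) ^ ν) ((x + 1) ^ ν) with hK0
    apply IntervalIntegrable.mono_fun'
      (((II_shift (hbp hp hb) (-1) c).const_mul (QB α β b n)).const_mul K0)
    · rw [Set.uIoc_of_le hc1.le]
      exact aesm_of_contOn_Ioo (hcont1.mono (Set.Ioo_subset_Ioo le_rfl hcx.le))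
    · rw [Filter.EventuallyLE, Set.uIoc_of_le hc1.le, ae_restrict_iff' measurableSet_Ioc]
      apply Filter.Eventually.of_forall
      intro t ht
      have h1 : |(x - t) ^ ν| ≤ K0 := by
        rw [abs_of_nonneg (Real.rpow_nonneg (by linarith [ht.2, hcx]) _)]
        exact rpow_max_bound (by linarith) ⟨by linarith [ht.2], by linarith [ht.1]⟩
      have h2 : |jfpQ α β b p n t| ≤ QB α β b n * ((1+t)/2) ^ (b / p) :=
        abs_jfpQ_le α β b p hp n ⟨ht.1, by linarith [ht.2, hcx, hx.2]⟩
      have hK0' : 0 ≤ K0 := le_trans (Real.rpow_nonneg (by linarith) ν) (le_max_left _ _)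
      calc ‖(x - t) ^ ν * jfpQ α β b p n t‖ = |(x - t) ^ ν| * |jfpQ α β b p n t| := abs_mul _ _
        _ ≤ K0 * (QB α β b n * ((1+t)/2) ^ (b / p)) :=
            mul_le_mul h1 h2 (abs_nonneg _) hK0'
  · -- on (c, x]: jfpQ bounded, kernel integrable
    set W0 : ℝ := max (((1+c)/2) ^ (b/(p:ℝ))) (((1+x)/2) ^ (b/(p:ℝ))) with hW0
    apply IntervalIntegrable.mono_fun' ((II_ker hν x c x).const_mul (QB α β b n * W0))
    · rw [Set.uIoc_of_le hcx.le]
      exact aesm_of_contOn_Ioo (hcont1.mono (Set.Ioo_subset_Ioo hc1.le le_rfl))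
    · rw [Filter.EventuallyLE, Set.uIoc_of_le hcx.le, ae_restrict_iff' measurableSet_Ioc]
      apply Filter.Eventually.of_forall
      intro t ht
      have h2 : |jfpQ α β b p n t| ≤ QB α β b n * W0 := by
        refine (abs_jfpQ_le α β b p hp n ⟨hc1.trans ht.1, ht.2.trans hx.2⟩).trans ?_
        apply mul_le_mul_of_nonneg_left _ (QB_nonneg α β b n)
        exact rpow_max_bound (by linarith) ⟨by linarith [ht.1], by linarith [ht.2]⟩
      have h1 : |(x - t) ^ ν| = (x - t) ^ ν :=
        abs_of_nonneg (Real.rpow_nonneg (by linarith [ht.2]) _)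
      calc ‖(x - t) ^ ν * jfpQ α β b p n t‖ = |(x - t) ^ ν| * |jfpQ α β b p n t| := abs_mul _ _
        _ ≤ (x - t) ^ ν * (QB α β b n * W0) := by
            rw [h1]
            exact mul_le_mul_of_nonneg_left h2 (Real.rpow_nonneg (by linarith [ht.2]) _)
        _ = QB α β b n * W0 * (x - t) ^ ν := by ring

lemma II_ker_mul_cont {ν : ℝ} (hν : -1 < ν) {x : ℝ} (hx : -1 < x) {F : ℝ → ℝ}
    (hF : ContinuousOn F (Set.Icc (-1) x)) :
    IntervalIntegrable (fun t => (x - t) ^ ν * F t) volume (-1) x := by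
  obtain ⟨C, hC⟩ := (isCompact_Icc (a := (-1:ℝ)) (b := x)).exists_bound_of_continuousOn hF
  have hC0 : 0 ≤ C := le_trans (norm_nonneg _) (hC (-1) (Set.left_mem_Icc.mpr hx.le))
  apply IntervalIntegrable.mono_fun' ((II_ker hν x (-1) x).const_mul C)
  · rw [Set.uIoc_of_le hx.le]
    exact aesm_of_contOn_Ioo (contOn_ker.mul (hF.mono (fun t ht => ⟨ht.1.le, ht.2.le⟩)))
  · rw [Filter.EventuallyLE, Set.uIoc_of_le hx.le, ae_restrict_iff' measurableSet_Ioc]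
    apply Filter.Eventually.of_forall
    intro t ht
    have h1 : |(x - t) ^ ν| = (x - t) ^ ν :=
      abs_of_nonneg (Real.rpow_nonneg (by linarith [ht.2]) _)
    calc ‖(x - t) ^ ν * F t‖ = |(x - t) ^ ν| * ‖F t‖ := abs_mul _ _
      _ ≤ (x - t) ^ ν * C := by
          rw [h1]
          exact mul_le_mul_of_nonneg_left (hC t ⟨ht.1.le, ht.2⟩) (Real.rpow_nonneg (by linarith [ht.2]) _)
      _ = C * (x - t) ^ ν := by ring
end


lemma key_identity (α β b : ℝ) (p : ℕ) (hp : 0 < p) (hb : -(p:ℝ) < b) (μ : ℝ) (hμ : 0 < μ)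
    (n : ℕ) {x : ℝ} (hx : x ∈ Set.Ioc (-1:ℝ) 1) :
    fracInt μ (fun t => t * jfpQ α β b p n t + μ * ∫ s in (-1:ℝ)..t, jfpQ α β b p n s) x
      = x * fracInt μ (jfpQ α β b p n) x := by
  set f : ℝ → ℝ := jfpQ α β b p n with hf
  set F : ℝ → ℝ := fun t => ∫ s in (-1:ℝ)..t, f s with hFdef
  have hx1 : (-1:ℝ) < x := hx.1
  have hμ1 : (-1:ℝ) < μ - 1 := by linarith
  have hI1 : IntervalIntegrable f volume (-1) x := II_jfpQ hp hb n hx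
  have hI2 : IntervalIntegrable (fun t => (x - t) ^ (μ-1) * f t) volume (-1) x :=
    II_ker_jfpQ hp hb n hx hμ1
  have hI4 : IntervalIntegrable (fun t => (x - t) ^ μ * f t) volume (-1) x :=
    II_ker_jfpQ hp hb n hx (by linarith)
  have hIcc : IntegrableOn f (Set.Icc (-1) x) volume := by
    rw [integrableOn_Icc_iff_integrableOn_Ioc]
    exact (intervalIntegrable_iff_integrableOn_Ioc_of_le hx1.le).mp hI1
  have hFcont : ContinuousOn F (Set.Icc (-1) x) := by
    have := continuousOn_primitive_interval
      (a := (-1:ℝ)) (b := x) (μ := volume) (f := f) (by rwa [Set.uIcc_of_le hx1.le])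
    rwa [Set.uIcc_of_le hx1.le] at this
  have hI3 : IntervalIntegrable (fun t => (x - t) ^ (μ-1) * F t) volume (-1) x :=
    II_ker_mul_cont hμ1 hx1 hFcont
  have contOnf : ContinuousOn f (Set.Ioo (-1:ℝ) x) := fun t ht =>
    (contAt_jfpQ α β b p n ht.1).continuousWithinAt
  have contOnKer : ∀ ν : ℝ, ContinuousOn (fun t : ℝ => (x - t) ^ ν) (Set.Ioo (-1:ℝ) x) := by
    intro ν t ht
    exact (ContinuousAt.rpow_const (by fun_prop)
      (Or.inl (by simp only [sub_ne_zero]; exact (ne_of_lt ht.2).symm))).continuousWithinAt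
  have hI2' : IntervalIntegrable (fun t => (x - t) ^ (μ-1) * (t * f t)) volume (-1) x := by
    apply hI2.mono_fun
    · rw [Set.uIoc_of_le hx1.le]
      exact aesm_of_contOn_Ioo (((contOnKer (μ-1)).mul (continuousOn_id.mul contOnf)))
    · rw [Filter.EventuallyLE, Set.uIoc_of_le hx1.le, ae_restrict_iff' measurableSet_Ioc]
      apply Filter.Eventually.of_forall
      intro t ht
      have h1 : |t| ≤ 1 := abs_le.mpr ⟨ht.1.le, ht.2.trans hx.2⟩
      calc ‖(x - t) ^ (μ-1) * (t * f t)‖ = |t| * ‖(x - t) ^ (μ-1) * f t‖ := by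
            rw [Real.norm_eq_abs, Real.norm_eq_abs, abs_mul, abs_mul, abs_mul]; ring
        _ ≤ 1 * ‖(x - t) ^ (μ-1) * f t‖ := by
            exact mul_le_mul_of_nonneg_right h1 (norm_nonneg _)
        _ = ‖(x - t) ^ (μ-1) * f t‖ := one_mul _
  -- FTC part : ∫ (x-t)^μ f = μ * ∫ (x-t)^(μ-1) F
  have hFTC : (∫ t in (-1:ℝ)..x, (x - t) ^ μ * f t)
      = μ * ∫ t in (-1:ℝ)..x, (x - t) ^ (μ-1) * F t := by
    set G : ℝ → ℝ := fun t => (x - t) ^ μ * F t with hG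
    set g : ℝ → ℝ := fun t => (x - t) ^ μ * f t - μ * ((x - t) ^ (μ-1) * F t) with hg
    have hGcont : ContinuousOn G (Set.Icc (-1) x) := by
      apply ContinuousOn.mul _ hFcont
      apply Continuous.comp_continuousOn (Real.continuous_rpow_const hμ.le)
      fun_prop
    have hderiv : ∀ t ∈ Set.Ioo (-1:ℝ) x, HasDerivWithinAt G (g t) (Set.Ioi t) t := by
      intro t ht
      have hxt : (0:ℝ) < x - t := by linarith [ht.2]
      have hu : HasDerivAt (fun t : ℝ => (x - t) ^ μ) (μ * (x - t) ^ (μ-1) * (-1)) t := by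
        have h1 : HasDerivAt (fun y : ℝ => y ^ μ) (μ * (x - t) ^ (μ-1)) (x - t) := by
          exact Real.hasDerivAt_rpow_const (x := x - t) (p := μ) (Or.inl (ne_of_gt hxt))
        have h2 : HasDerivAt (fun t : ℝ => x - t) (-1) t := by
          simpa using (hasDerivAt_id t).const_sub x
        exact h1.comp t h2
      have hFd : HasDerivAt F (f t) t := by
        apply intervalIntegral.integral_hasDerivAt_right
          (hI1.mono_set ?_) ?_ (contAt_jfpQ α β b p n ht.1)
        · rw [Set.uIcc_of_le hx1.le, Set.uIcc_of_le ht.1.le]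
          exact Set.Icc_subset_Icc le_rfl ht.2.le
        · exact ⟨Set.Ioo (-1) x, Ioo_mem_nhds ht.1 ht.2,
            (contOnf.aestronglyMeasurable measurableSet_Ioo)⟩
      have : HasDerivWithinAt G _ (Set.Ioi t) t := (hu.mul hFd).hasDerivWithinAt (s := Set.Ioi t)
      convert this using 1
      simp only [hg, hFdef]
      ring
    have hgint : IntervalIntegrable g volume (-1) x := hI4.sub (hI3.const_mul μ)
    have h0 := intervalIntegral.integral_eq_sub_of_hasDeriv_right_of_le hx1.le hGcont hderiv hgint
    have hGx : G x = 0 := by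
      simp only [hG, sub_self, Real.zero_rpow (ne_of_gt hμ), zero_mul]
    have hGm : G (-1) = 0 := by
      simp only [hG, hFdef, intervalIntegral.integral_same, mul_zero]
    rw [hGx, hGm, sub_zero] at h0
    have h1 := intervalIntegral.integral_sub hI4 (hI3.const_mul μ)
    rw [hg] at h0
    rw [h1] at h0
    have h2 := intervalIntegral.integral_const_mul (a := (-1:ℝ)) (b := x) (μ := volume) μ (fun t => (x - t) ^ (μ-1) * F t)
    rw [h2] at h0
    linarith
  -- now assemble
  have hsplit : (∫ t in (-1:ℝ)..x, (x - t) ^ (μ-1) * (t * f t + μ * F t))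
      = (∫ t in (-1:ℝ)..x, (x - t) ^ (μ-1) * (t * f t))
        + μ * ∫ t in (-1:ℝ)..x, (x - t) ^ (μ-1) * F t := by
    rw [← intervalIntegral.integral_const_mul μ,
      ← intervalIntegral.integral_add hI2' ((hI3.const_mul μ))]
    apply intervalIntegral.integral_congr
    intro t _
    simp only; ring
  have hker_x : (∫ t in (-1:ℝ)..x, (x - t) ^ (μ-1) * (x * f t))
      = (∫ t in (-1:ℝ)..x, (x - t) ^ (μ-1) * (t * f t))
        + ∫ t in (-1:ℝ)..x, (x - t) ^ μ * f t := by
    rw [← intervalIntegral.integral_add hI2' hI4]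
    apply intervalIntegral.integral_congr
    intro t ht
    rw [Set.uIcc_of_le hx1.le] at ht
    simp only
    rcases eq_or_lt_of_le ht.2 with h | h
    · rw [h, sub_self, Real.zero_rpow (ne_of_gt hμ)]
      rcases eq_or_ne μ 1 with h1 | h1
      · simp [h1]
      · rw [Real.zero_rpow (by intro hc; apply h1; linarith [sub_eq_zero.mp hc])]; ring
    · have hxt : (0:ℝ) < x - t := by linarith
      have hexp : μ - 1 + 1 = μ := by ring
      have heq : (x - t) ^ (μ-1) * (x - t) = (x - t) ^ μ := by
        calc (x - t) ^ (μ-1) * (x - t) = (x - t) ^ (μ-1) * (x - t) ^ (1:ℝ) := by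
              rw [Real.rpow_one]
          _ = (x - t) ^ (μ - 1 + 1) := (Real.rpow_add hxt _ _).symm
          _ = (x - t) ^ μ := by rw [hexp]
      linear_combination f t * heq
  have hcongr_xmul : (∫ t in (-1:ℝ)..x, (x - t) ^ (μ-1) * (x * f t))
      = x * ∫ t in (-1:ℝ)..x, (x - t) ^ (μ-1) * f t := by
    rw [← intervalIntegral.integral_const_mul x]
    apply intervalIntegral.integral_congr
    intro t _; simp only; ring
  simp only [fracInt]
  rw [hsplit, ← hFTC, ← hker_x, hcongr_xmul]
  ring


noncomputable def jpoly (α β : ℝ) (n : ℕ) : Polynomial ℝ :=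
  ∑ k ∈ Finset.range (n+1), Polynomial.C (Ccoef α β k n) * (1 + Polynomial.X) ^ k

lemma jpoly_eval (α β : ℝ) (n : ℕ) (y : ℝ) : (jpoly α β n).eval y = jacobiP α β n y := by
  simp [jpoly, jacobiP, Polynomial.eval_finset_sum]

lemma jpoly_natDegree_le (α β : ℝ) (n : ℕ) : (jpoly α β n).natDegree ≤ n := by
  apply (Polynomial.natDegree_sum_le _ _).trans
  rw [Finset.fold_max_le]
  refine ⟨Nat.zero_le _, fun k hk => ?_⟩
  apply (Polynomial.natDegree_C_mul_le _ _).trans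
  apply (Polynomial.natDegree_pow_le).trans
  have : (1 + Polynomial.X : Polynomial ℝ).natDegree ≤ 1 := by
    apply (Polynomial.natDegree_add_le _ _).trans
    simp
  calc k * (1 + Polynomial.X : Polynomial ℝ).natDegree ≤ k * 1 :=
        Nat.mul_le_mul_left k this
    _ ≤ n := by rw [mul_one]; exact Nat.lt_succ_iff.mp (Finset.mem_range.mp hk)

lemma jpoly_coeff_self (α β : ℝ) (n : ℕ) : (jpoly α β n).coeff n = Ccoef α β n n := by
  rw [jpoly, Polynomial.finset_sum_coeff]
  rw [Finset.sum_range_succ]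
  have h1 : ∀ k ∈ Finset.range n, (Polynomial.C (Ccoef α β k n) * (1 + Polynomial.X) ^ k).coeff n = 0 := by
    intro k hk
    rw [Polynomial.coeff_C_mul, Polynomial.coeff_one_add_X_pow]
    rw [Nat.choose_eq_zero_of_lt (Finset.mem_range.mp hk)]
    simp
  rw [Finset.sum_eq_zero h1, zero_add, Polynomial.coeff_C_mul, Polynomial.coeff_one_add_X_pow]
  simp

lemma Ccoef_diag_pos_s10 (α β : ℝ) (hαβ : -2 < α + β) (n : ℕ) : 0 < Ccoef α β n n := by
  rw [Ccoef, if_pos le_rfl, Nat.sub_self]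
  simp only [pow_zero, ascPochhammer_zero, Polynomial.eval_one, one_mul, Nat.factorial_zero]
  rcases Nat.eq_zero_or_pos n with h | h
  · subst h; simp
  · apply div_pos
    · apply ascPochhammer_pos
      have : (1:ℝ) ≤ (n:ℝ) := by exact_mod_cast h
      linarith
    · positivity

lemma jacobi_coef_zero (α β : ℝ) (hαβ : -2 < α + β) :
    ∀ N (c : ℕ → ℝ),
      (∀ y ∈ Set.Ioc (-1:ℝ) 1, ∑ i ∈ Finset.range N, c i * jacobiP α β i y = 0) →
      ∀ i < N, c i = 0 := by
  intro N
  induction N with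
  | zero => intro c _ i hi; exact absurd hi (Nat.not_lt_zero i)
  | succ N ih =>
    intro c hc
    have hP : (∑ i ∈ Finset.range (N+1), Polynomial.C (c i) * jpoly α β i) = 0 := by
      apply Polynomial.eq_zero_of_infinite_isRoot
      apply Set.Infinite.mono (s := Set.Ioc (-1:ℝ) 1) ?_ ?_
      · intro y hy
        simp only [Set.mem_setOf_eq, Polynomial.IsRoot, Polynomial.eval_finset_sum,
          Polynomial.eval_mul, Polynomial.eval_C, jpoly_eval]
        exact hc y hy
      · exact Set.Ioc_infinite (show (-1:ℝ) < 1 by norm_num)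
    have hcN : c N = 0 := by
      have h0 := congrArg (fun q => Polynomial.coeff q N) hP
      simp only [Polynomial.finset_sum_coeff, Polynomial.coeff_C_mul, Polynomial.coeff_zero] at h0
      rw [Finset.sum_range_succ] at h0
      have h1 : ∀ i ∈ Finset.range N, c i * (jpoly α β i).coeff N = 0 := by
        intro i hi
        rw [Polynomial.coeff_eq_zero_of_natDegree_lt
          (lt_of_le_of_lt (jpoly_natDegree_le α β i) (Finset.mem_range.mp hi))]
        ring
      rw [Finset.sum_eq_zero h1, zero_add, jpoly_coeff_self] at h0
      exact (mul_eq_zero.mp h0).resolve_right (ne_of_gt (Ccoef_diag_pos_s10 α β hαβ N))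
    intro i hi
    rcases Nat.lt_succ_iff_lt_or_eq.mp hi with h | h
    · apply ih c _ i h
      intro y hy
      have := hc y hy
      rw [Finset.sum_range_succ, hcN, zero_mul, add_zero] at this
      exact this
    · rw [h]; exact hcN

lemma jfp_coef_zero (α β b : ℝ) (hαβ : -2 < α + β) (p : ℕ) (hp : 0 < p) (N : ℕ) (c : ℕ → ℝ)
    (hc : ∀ x ∈ Set.Ioc (-1:ℝ) 1, ∑ i ∈ Finset.range N, c i * jfpQ α β b p i x = 0) :
    ∀ i < N, c i = 0 := by
  apply jacobi_coef_zero α β hαβ N c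
  intro y hy
  have hw : (0:ℝ) < (1+y)/2 := by have := hy.1; linarith
  have hw1 : (1+y)/2 ≤ 1 := by have := hy.2; linarith
  set x : ℝ := 2 * ((1+y)/2) ^ (p:ℕ) - 1 with hxdef
  have hx : x ∈ Set.Ioc (-1:ℝ) 1 := by
    constructor
    · have := pow_pos hw p; rw [hxdef]; linarith
    · have := pow_le_one₀ hw.le hw1 (n := p); rw [hxdef]; linarith
  have hxy : 2 * ((1 + x)/2) ^ (1/(p:ℝ)) = 1 + y := by
    have h1 : (1 + x)/2 = ((1+y)/2) ^ (p:ℕ) := by rw [hxdef]; ring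
    rw [h1, ← Real.rpow_natCast ((1+y)/2) p, ← Real.rpow_mul hw.le]
    rw [mul_one_div_cancel (by exact_mod_cast hp.ne' : (p:ℝ) ≠ 0), Real.rpow_one]
    ring
  have h0 := hc x hx
  simp only [jfpQ, hxy] at h0
  have h1y : (0:ℝ) < 1 + y := by linarith
  have hpow : (0:ℝ) < (1+y) ^ b := Real.rpow_pos_of_pos h1y b
  have h2 : ∑ i ∈ Finset.range N, c i * ((1+y) ^ b * jacobiP α β i (1 + y - 1)) =
      (1+y) ^ b * ∑ i ∈ Finset.range N, c i * jacobiP α β i (1 + y - 1) := by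
    rw [Finset.mul_sum]; apply Finset.sum_congr rfl; intro i _; ring
  rw [h2] at h0
  have h3 := (mul_eq_zero.mp h0).resolve_left (ne_of_gt hpow)
  simpa using h3


end SylvesterAux

/-- the fractional integration matrix satisfies the Sylvester equation
`A (X + μ J) = X A`. -/
theorem fracInt_matrix_sylvester
    (α β : ℝ) (hα : -1 < α) (hβ : -1 < β) (p : ℕ) (hp : 0 < p)
    (μ : ℝ) (hμ : 0 < μ) (k : ℕ) (hk : 0 < k) (hμp : μ * p = k)
    (b : ℝ) (hb : -(p : ℝ) < b)
    (hβb : ∃ j : ℕ, β - b = (j : ℝ))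
    (hbpβ : ∃ j : ℕ, b + p - 1 - β = (j : ℝ))
    (A : ℕ → ℕ → ℝ)
    (hA : ∀ n : ℕ, ∀ x ∈ Set.Ioc (-1 : ℝ) 1,
      fracInt μ (jfpQ α β b p n) x
        = ∑ m ∈ Finset.range (n + k + 1), A m n * jfpQ α β b p m x)
    (hA0 : ∀ m n : ℕ, n + k < m → A m n = 0)
    (X : ℕ → ℕ → ℝ)
    (hX : ∀ n : ℕ, ∀ x ∈ Set.Ioc (-1 : ℝ) 1,
      x * jfpQ α β b p n x
        = ∑ m ∈ Finset.range (n + p + 1), X m n * jfpQ α β b p m x)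
    (hX0 : ∀ m n : ℕ, (n + p < m ∨ m + p < n) → X m n = 0)
    (J : ℕ → ℕ → ℝ)
    (hJ : ∀ n : ℕ, ∀ x ∈ Set.Ioc (-1 : ℝ) 1,
      (∫ t in (-1 : ℝ)..x, jfpQ α β b p n t)
        = ∑ m ∈ Finset.range (n + p + 1), J m n * jfpQ α β b p m x)
    (hJ0 : ∀ m n : ℕ, (n + p < m ∨ m + p < n) → J m n = 0) :
    ∀ m n : ℕ,
      ∑ j ∈ Finset.range (n + p + k + 1), A m j * (X j n + μ * J j n)
        = ∑ j ∈ Finset.range (n + p + k + 1), X m j * A j n := by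
  intro m n
  have hαβ : (-2:ℝ) < α + β := by linarith
  set Q : ℕ → ℝ → ℝ := jfpQ α β b p with hQ
  set N : ℕ := n + p + k + 1 with hN
  set M : ℕ := n + 2*p + 2*k + 1 with hM
  set L : ℕ → ℝ := fun i => ∑ j ∈ Finset.range N, A i j * (X j n + μ * J j n) with hL
  set R : ℕ → ℝ := fun i => ∑ j ∈ Finset.range N, X i j * A j n with hR
  have hrange : ∀ (c : ℕ) (i : ℕ), i ∉ Finset.range c → c ≤ i := by
    intro c i hi
    by_contra h
    exact hi (Finset.mem_range.mpr (by omega))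
  -- Claim 2 : RHS expansion sums to x * fracInt μ (Q n) x
  have hclaim2 : ∀ x ∈ Set.Ioc (-1:ℝ) 1,
      ∑ i ∈ Finset.range M, R i * Q i x = x * fracInt μ (Q n) x := by
    intro x hx
    have h1 : ∑ i ∈ Finset.range M, R i * Q i x
        = ∑ j ∈ Finset.range N, A j n * ∑ i ∈ Finset.range M, X i j * Q i x := by
      simp only [hR, Finset.sum_mul]
      rw [Finset.sum_comm]
      apply Finset.sum_congr rfl; intro j _
      rw [Finset.mul_sum]
      apply Finset.sum_congr rfl; intro i _; ring
    rw [h1]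
    have h2 : ∀ j ∈ Finset.range N, A j n * (∑ i ∈ Finset.range M, X i j * Q i x)
        = A j n * (x * Q j x) := by
      intro j hj
      congr 1
      have hsub : Finset.range (j + p + 1) ⊆ Finset.range M := by
        apply Finset.range_subset_range.mpr
        have := Finset.mem_range.mp hj
        omega
      rw [← Finset.sum_subset hsub (fun i _ hi => by
        rw [hX0 i j (Or.inl (by have := hrange _ _ hi; omega)), zero_mul])]
      exact (hX j x hx).symm
    rw [Finset.sum_congr rfl h2]
    have h3 : ∑ j ∈ Finset.range N, A j n * (x * Q j x)
        = x * ∑ j ∈ Finset.range N, A j n * Q j x := by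
      rw [Finset.mul_sum]; apply Finset.sum_congr rfl; intro j _; ring
    rw [h3]
    have hsub2 : Finset.range (n + k + 1) ⊆ Finset.range N := by
      apply Finset.range_subset_range.mpr; omega
    rw [← Finset.sum_subset hsub2 (fun j _ hj => by
      rw [hA0 j n (by have := hrange _ _ hj; omega), zero_mul])]
    rw [← hA n x hx]
  -- Claim 1 : LHS expansion sums to x * fracInt μ (Q n) x
  have hclaim1 : ∀ x ∈ Set.Ioc (-1:ℝ) 1,
      ∑ i ∈ Finset.range M, L i * Q i x = x * fracInt μ (Q n) x := by
    intro x hx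
    have hx1 : (-1:ℝ) < x := hx.1
    have hμ1 : (-1:ℝ) < μ - 1 := by linarith
    have h1 : ∑ i ∈ Finset.range M, L i * Q i x
        = ∑ j ∈ Finset.range N, (X j n + μ * J j n) * ∑ i ∈ Finset.range M, A i j * Q i x := by
      simp only [hL, Finset.sum_mul]
      rw [Finset.sum_comm]
      apply Finset.sum_congr rfl; intro j _
      rw [Finset.mul_sum]
      apply Finset.sum_congr rfl; intro i _; ring
    rw [h1]
    have h2 : ∀ j ∈ Finset.range N, (X j n + μ * J j n) * (∑ i ∈ Finset.range M, A i j * Q i x)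
        = (X j n + μ * J j n) * fracInt μ (Q j) x := by
      intro j hj
      congr 1
      have hsub : Finset.range (j + k + 1) ⊆ Finset.range M := by
        apply Finset.range_subset_range.mpr
        have := Finset.mem_range.mp hj
        omega
      rw [← Finset.sum_subset hsub (fun i _ hi => by
        rw [hA0 i j (by have := hrange _ _ hi; omega), zero_mul])]
      exact (hA j x hx).symm
    rw [Finset.sum_congr rfl h2]
    -- linearity of fracInt
    have hIIj : ∀ j ∈ Finset.range N, IntervalIntegrable
        (fun t => (X j n + μ * J j n) * ((x - t) ^ (μ-1) * Q j t)) volume (-1) x :=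
      fun j _ => (II_ker_jfpQ hp hb j hx hμ1).const_mul _
    have hlin : ∑ j ∈ Finset.range N, (X j n + μ * J j n) * fracInt μ (Q j) x
        = (1 / Real.Gamma μ) * ∫ t in (-1:ℝ)..x,
            ∑ j ∈ Finset.range N, (X j n + μ * J j n) * ((x - t) ^ (μ-1) * Q j t) := by
      rw [intervalIntegral.integral_finset_sum hIIj, Finset.mul_sum]
      apply Finset.sum_congr rfl; intro j _
      rw [fracInt, intervalIntegral.integral_const_mul]
      ring
    rw [hlin]
    -- pointwise identification of the integrand on Ioc (-1) x
    have hptw : ∀ t ∈ Set.Ioc (-1:ℝ) x,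
        ∑ j ∈ Finset.range N, (X j n + μ * J j n) * ((x - t) ^ (μ-1) * Q j t)
          = (x - t) ^ (μ-1) * (t * Q n t + μ * ∫ s in (-1:ℝ)..t, Q n s) := by
      intro t ht
      have htI : t ∈ Set.Ioc (-1:ℝ) 1 := ⟨ht.1, ht.2.trans hx.2⟩
      have hsub3 : Finset.range (n + p + 1) ⊆ Finset.range N := by
        apply Finset.range_subset_range.mpr; omega
      have hG : ∑ j ∈ Finset.range N, (X j n + μ * J j n) * Q j t
          = t * Q n t + μ * ∫ s in (-1:ℝ)..t, Q n s := by
        rw [← Finset.sum_subset hsub3 (fun j _ hj => by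
          rw [hX0 j n (Or.inl (by have := hrange _ _ hj; omega)),
            hJ0 j n (Or.inl (by have := hrange _ _ hj; omega))]
          ring)]
        rw [hX n t htI, hJ n t htI, Finset.mul_sum, ← Finset.sum_add_distrib]
        apply Finset.sum_congr rfl; intro j _; ring
      calc ∑ j ∈ Finset.range N, (X j n + μ * J j n) * ((x - t) ^ (μ-1) * Q j t)
          = (x - t) ^ (μ-1) * ∑ j ∈ Finset.range N, (X j n + μ * J j n) * Q j t := by
            rw [Finset.mul_sum]; apply Finset.sum_congr rfl; intro j _; ring
        _ = (x - t) ^ (μ-1) * (t * Q n t + μ * ∫ s in (-1:ℝ)..t, Q n s) := by rw [hG]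
    have hint_eq : (∫ t in (-1:ℝ)..x,
          ∑ j ∈ Finset.range N, (X j n + μ * J j n) * ((x - t) ^ (μ-1) * Q j t))
        = ∫ t in (-1:ℝ)..x, (x - t) ^ (μ-1) * (t * Q n t + μ * ∫ s in (-1:ℝ)..t, Q n s) := by
      rw [intervalIntegral.integral_of_le hx1.le, intervalIntegral.integral_of_le hx1.le]
      apply MeasureTheory.setIntegral_congr_fun measurableSet_Ioc
      intro t ht
      exact hptw t ht
    rw [hint_eq]
    exact key_identity α β b p hp hb μ hμ n hx
  -- combine claims : coefficients agree
  have hdiff : ∀ x ∈ Set.Ioc (-1:ℝ) 1,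
      ∑ i ∈ Finset.range M, (L i - R i) * Q i x = 0 := by
    intro x hx
    have : ∑ i ∈ Finset.range M, (L i - R i) * Q i x
        = (∑ i ∈ Finset.range M, L i * Q i x) - ∑ i ∈ Finset.range M, R i * Q i x := by
      rw [← Finset.sum_sub_distrib]
      apply Finset.sum_congr rfl; intro i _; ring
    rw [this, hclaim1 x hx, hclaim2 x hx, sub_self]
  have hcoef := jfp_coef_zero α β b hαβ p hp M (fun i => L i - R i) hdiff
  rcases lt_or_ge m M with hm | hm
  · have h : L m - R m = 0 := hcoef m hm
    linarith
  · have hLm : L m = 0 := by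
      apply Finset.sum_eq_zero
      intro j hj
      rw [hA0 m j (by have := Finset.mem_range.mp hj; omega)]
      ring
    have hRm : R m = 0 := by
      apply Finset.sum_eq_zero
      intro j hj
      rw [hX0 m j (Or.inl (by have := Finset.mem_range.mp hj; omega))]
      ring
    rw [← hL, ← hR] at *
    show L m = R m
    rw [hLm, hRm]
end
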